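/- arXiv:1305.3414 — 8 statements merged into one kernel-verified Lean document; each statement's English description precedes it below -/
import Mathlib

section
/- Let G be a bipartite graph with orientation σ such that Sp_S(G^σ) = i·Sp(G), and let e = xy be an edge of G with corresponding arc ê. Then the oriented graph G^σ − ê satisfies Sp_S(G^σ − ê) = i·Sp(G − e). -/
open Matrix

def IsSkewAdj {V : Type*} [Fintype V] [DecidableEq V]
    (G : SimpleGraph V) (S : Matrix V V ℝ) : Prop :=
  (∀ i j, G.Adj i j → (S i j = 1 ∨ S i j = -1)) ∧
  (∀ i j, ¬ G.Adj i j → S i j = 0) ∧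
  Sᵀ = -S

noncomputable def cSpec {V : Type*} [Fintype V] [DecidableEq V]
    (S : Matrix V V ℝ) : Multiset ℂ :=
  ((S.map (Complex.ofReal)).charpoly).roots

noncomputable def adjSpec {V : Type*} [Fintype V] [DecidableEq V]
    (G : SimpleGraph V) : Multiset ℂ := by
  classical exact cSpec (G.adjMatrix ℝ)

namespace SkewSpecAux

open Polynomial Finset

variable {V : Type*} [Fintype V] [DecidableEq V]

noncomputable def pterm (M : Matrix V V ℂ) (σ : Equiv.Perm V) : ℂ :=
  ((Equiv.Perm.sign σ : ℤ) : ℂ) * ∏ i, (if σ i = i then 1 else -M (σ i) i)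

lemma pterm_one (M : Matrix V V ℂ) : pterm M 1 = 1 := by simp [pterm]

lemma pterm_mul (M : Matrix V V ℂ) {σ τ : Equiv.Perm V} (h : σ.Disjoint τ) :
    pterm M (σ * τ) = pterm M σ * pterm M τ := by
  unfold pterm
  have hs : ((Equiv.Perm.sign (σ * τ) : ℤ) : ℂ)
      = ((Equiv.Perm.sign σ : ℤ) : ℂ) * ((Equiv.Perm.sign τ : ℤ) : ℂ) := by
    rw [_root_.map_mul]; push_cast; ring
  have hp : (∏ i, (if (σ * τ) i = i then 1 else -M ((σ * τ) i) i))
      = (∏ i, (if σ i = i then 1 else -M (σ i) i)) *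
        (∏ i, (if τ i = i then 1 else -M (τ i) i)) := by
    rw [← Finset.prod_mul_distrib]
    refine Finset.prod_congr rfl fun i _ => ?_
    rcases h i with h1 | h1
    · by_cases h2 : τ i = i
      · simp [Equiv.Perm.mul_apply, h1, h2]
      · have h3 : σ (τ i) = τ i := by
          rcases h (τ i) with h4 | h4
          · exact h4
          · exact absurd (τ.injective h4) h2
        have h5 : (σ * τ) i = τ i := by rw [Equiv.Perm.mul_apply, h3]
        rw [h5, if_neg h2, if_pos h1, one_mul]
    · have h5 : (σ * τ) i = σ i := by rw [Equiv.Perm.mul_apply, h1]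
      rw [h5, if_pos h1, mul_one]
  rw [hs, hp]; ring

lemma pterm_prod_factors (M : Matrix V V ℂ) (σ : Equiv.Perm V) :
    pterm M σ = ∏ c ∈ σ.cycleFactorsFinset, pterm M c := by
  induction σ using Equiv.Perm.cycle_induction_on with
  | base_one => simp [pterm_one, Equiv.Perm.cycleFactorsFinset_one]
  | base_cycles σ hσ => simp [hσ.cycleFactorsFinset_eq_singleton]
  | induction_disjoint σ τ hd hc ih1 ih2 =>
      rw [pterm_mul M hd, ih1, ih2, hd.cycleFactorsFinset_mul_eq_union,
        Finset.prod_union hd.disjoint_cycleFactorsFinset]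

lemma charpoly_eq_sum_pterm (M : Matrix V V ℂ) (hd : ∀ i, M i i = 0) :
    M.charpoly = ∑ σ : Equiv.Perm V, C (pterm M σ) * X ^ (Fintype.card V - σ.support.card) := by
  rw [Matrix.charpoly, Matrix.det_apply]
  refine Finset.sum_congr rfl fun σ _ => ?_
  have h1 : ∀ i : V, charmatrix M (σ i) i
      = if σ i = i then (X : ℂ[X]) else C (-M (σ i) i) := by
    intro i; by_cases h : σ i = i
    · rw [if_pos h, h, charmatrix_apply_eq, hd, map_zero, sub_zero]
    · rw [if_neg h, charmatrix_apply_ne _ _ _ h, map_neg]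
  have hfix : univ.filter (fun i : V => σ i = i) = σ.supportᶜ := by
    ext i; simp [Equiv.Perm.mem_support]
  have hmov : univ.filter (fun i : V => ¬ σ i = i) = σ.support := by
    ext i; simp [Equiv.Perm.mem_support]
  calc Equiv.Perm.sign σ • ∏ i, charmatrix M (σ i) i
      = ((Equiv.Perm.sign σ : ℤ) : ℂ[X]) * ∏ i, (if σ i = i then (X : ℂ[X]) else C (-M (σ i) i)) := by
        rw [Finset.prod_congr rfl fun i _ => h1 i, Units.smul_def, zsmul_eq_mul]
    _ = ((Equiv.Perm.sign σ : ℤ) : ℂ[X]) *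
        (X ^ (Fintype.card V - σ.support.card) * C (∏ i ∈ σ.support, -M (σ i) i)) := by
        rw [Finset.prod_ite, hfix, hmov, Finset.prod_const, Finset.card_compl, map_prod]
    _ = C (pterm M σ) * X ^ (Fintype.card V - σ.support.card) := by
        unfold pterm
        rw [Finset.prod_ite, hfix, hmov, Finset.prod_const, one_pow, one_mul, _root_.map_mul,
          map_prod, map_intCast]
        ring


lemma sum_pterm_card_eq {M N : Matrix V V ℂ} (hM : ∀ i, M i i = 0) (hN : ∀ i, N i i = 0)
    (h : M.charpoly = N.charpoly) (r : ℕ) (hr : r ≤ Fintype.card V) :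
    ∑ σ ∈ univ.filter (fun σ : Equiv.Perm V => σ.support.card = r), pterm M σ
      = ∑ σ ∈ univ.filter (fun σ : Equiv.Perm V => σ.support.card = r), pterm N σ := by
  have key : ∀ (P : Matrix V V ℂ), (∀ i, P i i = 0) →
      P.charpoly.coeff (Fintype.card V - r)
        = ∑ σ ∈ univ.filter (fun σ : Equiv.Perm V => σ.support.card = r), pterm P σ := by
    intro P hP
    rw [charpoly_eq_sum_pterm P hP, Polynomial.finset_sum_coeff, Finset.sum_filter]
    refine Finset.sum_congr rfl fun σ _ => ?_
    rw [Polynomial.coeff_C_mul, Polynomial.coeff_X_pow]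
    have hle : σ.support.card ≤ Fintype.card V := by
      simpa using Finset.card_le_univ σ.support
    by_cases hc : σ.support.card = r
    · rw [if_pos (by omega), if_pos hc, mul_one]
    · rw [if_neg (by omega), if_neg hc, mul_zero]
  rw [← key M hM, ← key N hN, h]

lemma even_card_of_cycle (G : SimpleGraph V) (X : Finset V)
    (hbip : ∀ i j, G.Adj i j → (i ∈ X ↔ j ∉ X))
    {c : Equiv.Perm V} (hc : c.IsCycle) (hadj : ∀ i, c i ≠ i → G.Adj (c i) i) :
    Even c.support.card := by
  obtain ⟨i0, hi0, -⟩ := id hc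
  have key : ∀ k : ℕ, ((c ^ k) i0 ∈ X ↔ (i0 ∈ X ↔ Even k)) := by
    intro k; induction k with
    | zero => simp
    | succ k ih =>
      have hmem : (c ^ k) i0 ∈ c.support :=
        Equiv.Perm.pow_apply_mem_support.mpr (Equiv.Perm.mem_support.mpr hi0)
      have hne : c ((c ^ k) i0) ≠ (c ^ k) i0 := Equiv.Perm.mem_support.mp hmem
      have hb := hbip _ _ (hadj _ hne)
      have hpow : (c ^ (k + 1)) i0 = c ((c ^ k) i0) := by
        rw [pow_succ']; simp [Equiv.Perm.mul_apply]
      rw [hpow, Nat.even_add_one]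
      tauto
  have hord : (c ^ c.support.card) i0 = i0 := by
    rw [← hc.orderOf, pow_orderOf_eq_one]; simp
  have := key c.support.card
  rw [hord] at this
  tauto

lemma sum_eq_zero_forall {α : Type*} [DecidableEq α] {s : Finset α} {f : α → ℂ} {t : ℂ}
    (ht : t ≠ 0) (h : ∀ x ∈ s, f x = 0 ∨ f x = t) (hsum : ∑ x ∈ s, f x = 0) :
    ∀ x ∈ s, f x = 0 := by
  classical
  have hsplit : ∑ x ∈ s, f x
      = ∑ x ∈ s.filter (fun x => f x = t), f x + ∑ x ∈ s.filter (fun x => ¬ f x = t), f x :=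
    (Finset.sum_filter_add_sum_filter_not s _ f).symm
  have h1 : ∑ x ∈ s.filter (fun x => f x = t), f x
      = (s.filter (fun x => f x = t)).card • t := by
    rw [Finset.sum_congr rfl fun x hx => (Finset.mem_filter.mp hx).2, Finset.sum_const]
  have h2 : ∑ x ∈ s.filter (fun x => ¬ f x = t), f x = 0 := by
    refine Finset.sum_eq_zero fun x hx => ?_
    rcases Finset.mem_filter.mp hx with ⟨hxs, hxt⟩
    rcases h x hxs with h' | h'
    · exact h'
    · exact absurd h' hxt
  rw [hsplit, h1, h2, add_zero, nsmul_eq_mul, mul_eq_zero] at hsum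
  rcases hsum with h' | h'
  · have hcard : (s.filter (fun x => f x = t)).card = 0 := by exact_mod_cast h'
    intro x hx
    rcases h x hx with h'' | h''
    · exact h''
    · exfalso
      have : x ∈ s.filter (fun x => f x = t) := Finset.mem_filter.mpr ⟨hx, h''⟩
      rw [Finset.card_eq_zero.mp hcard] at this
      simp at this
  · exact absurd h' ht


lemma pm_one_of_pm_factors {M : Matrix V V ℂ} {d : Equiv.Perm V}
    (h1 : ∀ i, d i ≠ i → (M (d i) i = 1 ∨ M (d i) i = -1)) :
    pterm M d = 1 ∨ pterm M d = -1 := by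
  unfold pterm
  have hs : ((Equiv.Perm.sign d : ℤ) : ℂ) = 1 ∨ ((Equiv.Perm.sign d : ℤ) : ℂ) = -1 := by
    rcases Int.units_eq_one_or (Equiv.Perm.sign d) with h | h <;> rw [h] <;> simp
  have hp : (∏ i, (if d i = i then 1 else -M (d i) i)) = 1
      ∨ (∏ i, (if d i = i then 1 else -M (d i) i)) = -1 := by
    refine Finset.prod_induction _ (fun z => z = 1 ∨ z = -1) ?_ (Or.inl rfl) ?_
    · rintro a b (ha | ha) (hb | hb) <;> rw [ha, hb] <;> norm_num
    · intro i _
      by_cases hi : d i = i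
      · rw [if_pos hi]; exact Or.inl rfl
      · rw [if_neg hi]
        rcases h1 i hi with h' | h' <;> rw [h'] <;> norm_num
  rcases hs with h | h <;> rcases hp with h' | h' <;> rw [h, h'] <;> norm_num

lemma pterm_cycle_eq (G : SimpleGraph V) (X : Finset V)
    (hbip : ∀ i j, G.Adj i j → (i ∈ X ↔ j ∉ X)) {M N : Matrix V V ℂ}
    (hM1 : ∀ i j, G.Adj i j → (M i j = 1 ∨ M i j = -1))
    (hM0 : ∀ i j, ¬ G.Adj i j → M i j = 0)
    (hN1 : ∀ i j, G.Adj i j → N i j = Complex.I)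
    (hN0 : ∀ i j, ¬ G.Adj i j → N i j = 0)
    (hchar : M.charpoly = N.charpoly) :
    ∀ c : Equiv.Perm V, c.IsCycle → pterm M c = pterm N c := by
  classical
  have hMd : ∀ i, M i i = 0 := fun i => hM0 i i (G.irrefl)
  have hNd : ∀ i, N i i = 0 := fun i => hN0 i i (G.irrefl)
  suffices H : ∀ r, ∀ c : Equiv.Perm V, c.IsCycle → c.support.card = r →
      pterm M c = pterm N c by
    intro c hc; exact H _ c hc rfl
  intro r
  induction r using Nat.strong_induction_on with
  | _ r IH =>
  intro c hc hcr
  by_cases hsupp : ∀ i, c i ≠ i → G.Adj (c i) i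
  swap
  · push_neg at hsupp
    obtain ⟨i, hne, hnadj⟩ := hsupp
    have e1 : pterm M c = 0 := by
      unfold pterm
      rw [Finset.prod_eq_zero (Finset.mem_univ i) (by rw [if_neg hne, hM0 _ _ hnadj, neg_zero]),
        mul_zero]
    have e2 : pterm N c = 0 := by
      unfold pterm
      rw [Finset.prod_eq_zero (Finset.mem_univ i) (by rw [if_neg hne, hN0 _ _ hnadj, neg_zero]),
        mul_zero]
    rw [e1, e2]
  · have heven : Even r := hcr ▸ even_card_of_cycle G X hbip hc hsupp
    -- the common value of `pterm N` on adjacency cycles with support card r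
    set κ : ℂ := -(-Complex.I) ^ r with hκdef
    have hκpm : κ = 1 ∨ κ = -1 := by
      obtain ⟨l, hl⟩ := heven
      have : (-Complex.I) ^ r = ((-Complex.I) ^ 2) ^ l := by
        rw [← pow_mul]; congr 1; omega
      have h2 : (-Complex.I) ^ 2 = -1 := by
        rw [neg_pow]; simp [Complex.I_sq]
      by_cases hle : Even l
      · right; rw [hκdef, this, h2, hle.neg_one_pow]
      · left; rw [hκdef, this, h2, (Nat.not_even_iff_odd.mp hle).neg_one_pow]; ring
    have hκ0 : κ ≠ 0 := by rcases hκpm with h | h <;> rw [h] <;> norm_num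
    have hNval : ∀ d : Equiv.Perm V, d.IsCycle → d.support.card = r →
        (∀ i, d i ≠ i → G.Adj (d i) i) → pterm N d = κ := by
      intro d hd hdr hdadj
      unfold pterm
      have hsign : ((Equiv.Perm.sign d : ℤ) : ℂ) = -1 := by
        rw [hd.sign, hdr]
        have : (-1 : ℤˣ) ^ r = 1 := heven.neg_one_pow
        rw [this]; simp
      have hmov : univ.filter (fun i : V => ¬ d i = i) = d.support := by
        ext i; simp [Equiv.Perm.mem_support]
      have hprod : (∏ i, (if d i = i then 1 else -N (d i) i)) = (-Complex.I) ^ r := by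
        rw [Finset.prod_ite, hmov, Finset.prod_const, one_pow, one_mul]
        rw [Finset.prod_congr rfl fun i hi => by
          rw [hN1 _ _ (hdadj i (Equiv.Perm.mem_support.mp hi))]]
        rw [Finset.prod_const, hdr]
      rw [hsign, hprod, hκdef]; ring
    have hMpm : ∀ d : Equiv.Perm V, (∀ i, d i ≠ i → G.Adj (d i) i) →
        pterm M d = 1 ∨ pterm M d = -1 :=
      fun d hd => pm_one_of_pm_factors (fun i hi => hM1 _ _ (hd i hi))
    -- sum identity at level r
    have hrle : r ≤ Fintype.card V := by
      rw [← hcr]; simpa using Finset.card_le_univ c.support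
    have hsum := sum_pterm_card_eq hMd hNd hchar r hrle
    set A := univ.filter (fun σ : Equiv.Perm V => σ.support.card = r) with hAdef
    set B := A.filter (fun σ : Equiv.Perm V => σ.IsCycle) with hBdef
    have hBA : B ⊆ A := Finset.filter_subset _ _
    have hAnotB : ∀ σ ∈ A, σ ∉ B → pterm M σ = pterm N σ := by
      intro σ hA hB
      have hσr : σ.support.card = r := (Finset.mem_filter.mp hA).2
      have hncyc : ¬ σ.IsCycle := fun h => hB (Finset.mem_filter.mpr ⟨hA, h⟩)
      rw [pterm_prod_factors M σ, pterm_prod_factors N σ]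
      refine Finset.prod_congr rfl fun d hd => ?_
      have hdc : d.IsCycle := (Equiv.Perm.mem_cycleFactorsFinset_iff.mp hd).1
      have hsub : d.support ⊆ σ.support := Equiv.Perm.mem_cycleFactorsFinset_support_le hd
      have hlt : d.support.card < r := by
        rcases lt_or_eq_of_le (Finset.card_le_card hsub) with h | h
        · omega
        · exfalso
          have hssup : d.support = σ.support :=
            Finset.eq_of_subset_of_card_le hsub (le_of_eq h.symm)
          have hσd : σ = d := by
            ext a
            by_cases ha : a ∈ d.support
            · exact ((Equiv.Perm.mem_cycleFactorsFinset_iff.mp hd).2 a ha).symm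
            · have ha' : a ∉ σ.support := hssup ▸ ha
              rw [Equiv.Perm.notMem_support.mp ha', Equiv.Perm.notMem_support.mp ha]
          exact hncyc (hσd ▸ hdc)
      exact IH _ hlt d hdc rfl
    have hBsum : ∑ σ ∈ B, (pterm M σ - pterm N σ) = 0 := by
      have hA0 : ∑ σ ∈ A, (pterm M σ - pterm N σ) = 0 := by
        rw [Finset.sum_sub_distrib, hsum, sub_self]
      rw [← hA0]
      exact Finset.sum_subset hBA (fun σ h1 h2 => by rw [hAnotB σ h1 h2, sub_self])
    have hterm : ∀ σ ∈ B, pterm M σ - pterm N σ = 0 ∨ pterm M σ - pterm N σ = -2 * κ := by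
      intro σ hσ
      have hσA := hBA hσ
      have hσr : σ.support.card = r := (Finset.mem_filter.mp hσA).2
      have hσc : σ.IsCycle := (Finset.mem_filter.mp hσ).2
      by_cases hadj : ∀ i, σ i ≠ i → G.Adj (σ i) i
      · have hNσ : pterm N σ = κ := hNval σ hσc hσr hadj
        rcases hMpm σ hadj with h | h <;> rcases hκpm with h' | h' <;>
          rw [hNσ, h, h'] <;> norm_num
      · push_neg at hadj
        obtain ⟨i, hne, hnadj⟩ := hadj
        left
        have e1 : pterm M σ = 0 := by
          unfold pterm
          rw [Finset.prod_eq_zero (Finset.mem_univ i)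
            (by rw [if_neg hne, hM0 _ _ hnadj, neg_zero]), mul_zero]
        have e2 : pterm N σ = 0 := by
          unfold pterm
          rw [Finset.prod_eq_zero (Finset.mem_univ i)
            (by rw [if_neg hne, hN0 _ _ hnadj, neg_zero]), mul_zero]
        rw [e1, e2, sub_self]
    have hall := sum_eq_zero_forall (t := -2 * κ) (by simpa using hκ0) hterm hBsum
    have hcB : c ∈ B := Finset.mem_filter.mpr
      ⟨Finset.mem_filter.mpr ⟨Finset.mem_univ c, hcr⟩, hc⟩
    exact sub_eq_zero.mp (hall c hcB)
    

lemma charpoly_delete (G : SimpleGraph V) (X : Finset V)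
    (hbip : ∀ i j, G.Adj i j → (i ∈ X ↔ j ∉ X)) {M N M' N' : Matrix V V ℂ} (x y : V)
    (hM1 : ∀ i j, G.Adj i j → (M i j = 1 ∨ M i j = -1))
    (hM0 : ∀ i j, ¬ G.Adj i j → M i j = 0)
    (hN1 : ∀ i j, G.Adj i j → N i j = Complex.I)
    (hN0 : ∀ i j, ¬ G.Adj i j → N i j = 0)
    (hchar : M.charpoly = N.charpoly)
    (hM' : ∀ i j, M' i j = if (i = x ∧ j = y) ∨ (i = y ∧ j = x) then 0 else M i j)
    (hN'1 : ∀ i j, (G.deleteEdges {s(x, y)}).Adj i j → N' i j = Complex.I)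
    (hN'0 : ∀ i j, ¬ (G.deleteEdges {s(x, y)}).Adj i j → N' i j = 0) :
    M'.charpoly = N'.charpoly := by
  classical
  have hQ := pterm_cycle_eq G X hbip hM1 hM0 hN1 hN0 hchar
  set G' := G.deleteEdges {s(x, y)} with hG'def
  have hG' : ∀ i j, G'.Adj i j ↔ (G.Adj i j ∧ ¬ ((i = x ∧ j = y) ∨ (i = y ∧ j = x))) := by
    intro i j
    rw [hG'def, SimpleGraph.deleteEdges_adj]
    constructor
    · rintro ⟨h1, h2⟩
      refine ⟨h1, fun h3 => h2 ?_⟩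
      simp only [Set.mem_singleton_iff, Sym2.eq_iff]
      tauto
    · rintro ⟨h1, h2⟩
      refine ⟨h1, fun h3 => h2 ?_⟩
      simp only [Set.mem_singleton_iff, Sym2.eq_iff] at h3
      tauto
  -- entries of M' are zero off G'
  have hM'0 : ∀ i j, ¬ G'.Adj i j → M' i j = 0 := by
    intro i j h
    rw [hM' i j]
    by_cases hcond : (i = x ∧ j = y) ∨ (i = y ∧ j = x)
    · rw [if_pos hcond]
    · rw [if_neg hcond]
      refine hM0 i j fun hadj => h ((hG' i j).mpr ⟨hadj, hcond⟩)
  have hM'd : ∀ i, M' i i = 0 := fun i => hM'0 i i (G'.irrefl)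
  have hN'd : ∀ i, N' i i = 0 := fun i => hN'0 i i (G'.irrefl)
  have hterm : ∀ σ : Equiv.Perm V, pterm M' σ = pterm N' σ := by
    intro σ
    rw [pterm_prod_factors M' σ, pterm_prod_factors N' σ]
    refine Finset.prod_congr rfl fun c hc => ?_
    have hcc : c.IsCycle := (Equiv.Perm.mem_cycleFactorsFinset_iff.mp hc).1
    by_cases hadj : ∀ i, c i ≠ i → G'.Adj (c i) i
    · have h1 : pterm M' c = pterm M c := by
        unfold pterm
        congr 1
        refine Finset.prod_congr rfl fun i _ => ?_
        by_cases hi : c i = i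
        · rw [if_pos hi, if_pos hi]
        · rw [if_neg hi, if_neg hi, hM' (c i) i,
            if_neg ((hG' (c i) i).mp (hadj i hi)).2]
      have h2 : pterm N' c = pterm N c := by
        unfold pterm
        congr 1
        refine Finset.prod_congr rfl fun i _ => ?_
        by_cases hi : c i = i
        · rw [if_pos hi, if_pos hi]
        · rw [if_neg hi, if_neg hi, hN'1 (c i) i (hadj i hi),
            hN1 (c i) i ((hG' (c i) i).mp (hadj i hi)).1]
      rw [h1, h2]
      exact hQ c hcc
    · push_neg at hadj
      obtain ⟨i, hne, hnadj⟩ := hadj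
      have e1 : pterm M' c = 0 := by
        unfold pterm
        rw [Finset.prod_eq_zero (Finset.mem_univ i)
          (by rw [if_neg hne, hM'0 _ _ hnadj, neg_zero]), mul_zero]
      have e2 : pterm N' c = 0 := by
        unfold pterm
        rw [Finset.prod_eq_zero (Finset.mem_univ i)
          (by rw [if_neg hne, hN'0 _ _ hnadj, neg_zero]), mul_zero]
      rw [e1, e2]
  rw [charpoly_eq_sum_pterm M' hM'd, charpoly_eq_sum_pterm N' hN'd]
  exact Finset.sum_congr rfl fun σ _ => by rw [hterm σ]

lemma roots_charpoly_smul (c : ℂ) (hc : c ≠ 0) (B : Matrix V V ℂ) :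
    (c • B).charpoly.roots = B.charpoly.roots.map (fun z => c * z) := by
  have hm := B.charpoly_monic
  have hsp : (B.charpoly).Splits := IsAlgClosed.splits _
  have hcard : B.charpoly.roots.card = Fintype.card V := by
    rw [Polynomial.splits_iff_card_roots.mp hsp, Matrix.charpoly_natDegree_eq_dim]
  set φ : ℂ[X] →+* ℂ[X] := (Polynomial.aeval (C c⁻¹ * X : ℂ[X])).toRingHom with hφdef
  have hφX : φ X = C c⁻¹ * X := by rw [hφdef]; simp
  have hφC : ∀ a : ℂ, φ (C a) = C a := by intro a; rw [hφdef]; simp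
  have hCc : (C c : ℂ[X]) * C c⁻¹ = 1 := by
    rw [← Polynomial.C_mul, mul_inv_cancel₀ hc, Polynomial.C_1]
  have step1 : charmatrix (c • B) = (C c : ℂ[X]) • (charmatrix B).map φ := by
    ext i j
    rw [Matrix.smul_apply, Matrix.map_apply, smul_eq_mul]
    by_cases h : i = j
    · subst h
      rw [charmatrix_apply_eq, charmatrix_apply_eq, map_sub, hφX, hφC,
        Matrix.smul_apply, smul_eq_mul, mul_sub, ← mul_assoc, hCc, one_mul, ← Polynomial.C_mul]
    · rw [charmatrix_apply_ne _ _ _ h, charmatrix_apply_ne _ _ _ h, map_neg, hφC,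
        Matrix.smul_apply, smul_eq_mul, mul_neg, ← Polynomial.C_mul]
  have step2 : (c • B).charpoly = (C c) ^ (Fintype.card V) * φ B.charpoly := by
    rw [Matrix.charpoly, step1, Matrix.det_smul]
    congr 1
    rw [Matrix.charpoly]
    exact (RingHom.map_det φ (charmatrix B)).symm
  have step4 : φ B.charpoly = (B.charpoly.roots.map (fun r => C c⁻¹ * X - C r)).prod := by
    conv_lhs => rw [Polynomial.Splits.eq_prod_roots_of_monic hsp hm]
    rw [map_multiset_prod, Multiset.map_map]
    congr 1
    refine Multiset.map_congr rfl fun r _ => ?_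
    simp only [Function.comp_apply, map_sub, hφX, hφC]
  have key : (c • B).charpoly = ((B.charpoly.roots.map (fun z => c * z)).map
      (fun a => X - C a)).prod := by
    rw [step2, step4, Multiset.map_map]
    rw [show (C c) ^ (Fintype.card V) = ((B.charpoly.roots.map (fun _ => (C c : ℂ[X]))).prod) by
      rw [Multiset.map_const', Multiset.prod_replicate, hcard]]
    rw [← Multiset.prod_map_mul]
    congr 1
    refine Multiset.map_congr rfl fun r _ => ?_
    simp only [Function.comp_apply]
    rw [mul_sub, ← mul_assoc, hCc, one_mul, ← Polynomial.C_mul]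
  rw [key, Polynomial.roots_multiset_prod_X_sub_C]

lemma charpoly_eq_of_roots {P Q : Matrix V V ℂ} (h : P.charpoly.roots = Q.charpoly.roots) :
    P.charpoly = Q.charpoly := by
  conv_lhs => rw [Polynomial.Splits.eq_prod_roots_of_monic (IsAlgClosed.splits _)
    P.charpoly_monic]
  conv_rhs => rw [Polynomial.Splits.eq_prod_roots_of_monic (IsAlgClosed.splits _)
    Q.charpoly_monic]
  rw [h]


lemma adjSpec_eq_roots {V : Type*} [Fintype V] [DecidableEq V]
    (G : SimpleGraph V) [inst : DecidableRel G.Adj] :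
    adjSpec G = ((G.adjMatrix ℝ).map Complex.ofReal).charpoly.roots := by
  unfold adjSpec cSpec
  congr!


end SkewSpecAux

open SkewSpecAux

/-- Deleting an edge: if `G` is bipartite with orientation `σ` such that
`Sp_S(G^σ) = i·Sp(G)`, and `e = xy` is an edge with corresponding arc `ê`, then
`Sp_S(G^σ - ê) = i·Sp(G - e)`. -/
theorem spec_deleteEdge
    {V : Type*} [Fintype V] [DecidableEq V]
    (G : SimpleGraph V) (X : Finset V)
    (hbip : ∀ i j, G.Adj i j → (i ∈ X ↔ j ∉ X))
    (S : Matrix V V ℝ) (hS : IsSkewAdj G S)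
    (hspec : cSpec S = (adjSpec G).map (fun z => Complex.I * z))
    (x y : V) (hxy : G.Adj x y) :
    cSpec (fun i j => if (i = x ∧ j = y) ∨ (i = y ∧ j = x) then 0 else S i j) =
      (adjSpec (G.deleteEdges {s(x, y)})).map (fun z => Complex.I * z) := by
  classical
  obtain ⟨hS1, hS0, -⟩ := hS
  set M : Matrix V V ℂ := S.map Complex.ofReal with hMdef
  have hM1 : ∀ i j, G.Adj i j → (M i j = 1 ∨ M i j = -1) := by
    intro i j h
    rcases hS1 i j h with h' | h'
    · left; simp [hMdef, Matrix.map_apply, h']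
    · right; simp [hMdef, Matrix.map_apply, h']
  have hM0 : ∀ i j, ¬ G.Adj i j → M i j = 0 := by
    intro i j h; simp [hMdef, Matrix.map_apply, hS0 i j h]
  set Araw : Matrix V V ℂ := (G.adjMatrix ℝ).map Complex.ofReal with hArawdef
  set N : Matrix V V ℂ := Complex.I • Araw with hNdef
  have hN1 : ∀ i j, G.Adj i j → N i j = Complex.I := by
    intro i j h
    simp [hNdef, hArawdef, Matrix.smul_apply, Matrix.map_apply, h]
  have hN0 : ∀ i j, ¬ G.Adj i j → N i j = 0 := by
    intro i j h
    simp [hNdef, hArawdef, Matrix.smul_apply, Matrix.map_apply, h]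
  have hchar : M.charpoly = N.charpoly := by
    apply charpoly_eq_of_roots
    have h2 : N.charpoly.roots = Araw.charpoly.roots.map (fun z => Complex.I * z) := by
      rw [hNdef]; exact roots_charpoly_smul _ Complex.I_ne_zero Araw
    rw [h2]
    calc M.charpoly.roots = cSpec S := rfl
      _ = (adjSpec G).map (fun z => Complex.I * z) := hspec
      _ = Araw.charpoly.roots.map (fun z => Complex.I * z) := by
          rw [adjSpec_eq_roots G]
  set G' := G.deleteEdges {s(x, y)} with hG'def
  set M' : Matrix V V ℂ :=
    Matrix.map (fun i j => if (i = x ∧ j = y) ∨ (i = y ∧ j = x) then 0 else S i j : Matrix V V ℝ)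
      Complex.ofReal with hM'def
  have hM' : ∀ i j, M' i j = if (i = x ∧ j = y) ∨ (i = y ∧ j = x) then 0 else M i j := by
    intro i j
    have h0 : M' i j
        = Complex.ofReal (if (i = x ∧ j = y) ∨ (i = y ∧ j = x) then 0 else S i j) := rfl
    rw [h0, apply_ite Complex.ofReal, Complex.ofReal_zero]
    rfl
  set Araw' : Matrix V V ℂ := (G'.adjMatrix ℝ).map Complex.ofReal with hAraw'def
  set N' : Matrix V V ℂ := Complex.I • Araw' with hN'def
  have hN'1 : ∀ i j, G'.Adj i j → N' i j = Complex.I := by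
    intro i j h
    simp [hN'def, hAraw'def, Matrix.smul_apply, Matrix.map_apply, h]
  have hN'0 : ∀ i j, ¬ G'.Adj i j → N' i j = 0 := by
    intro i j h
    simp [hN'def, hAraw'def, Matrix.smul_apply, Matrix.map_apply, h]
  have hfinal : M'.charpoly = N'.charpoly :=
    charpoly_delete G X hbip x y hM1 hM0 hN1 hN0 hchar hM' hN'1 hN'0
  calc cSpec (fun i j => if (i = x ∧ j = y) ∨ (i = y ∧ j = x) then 0 else S i j)
      = M'.charpoly.roots := rfl
    _ = N'.charpoly.roots := by rw [hfinal]
    _ = Araw'.charpoly.roots.map (fun z => Complex.I * z) := by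
        rw [hN'def]; exact roots_charpoly_smul _ Complex.I_ne_zero Araw'
    _ = (adjSpec G').map (fun z => Complex.I * z) := by rw [adjSpec_eq_roots G']
end

section
/- Let G be a bipartite graph with orientation σ. If every chordless cycle of G is oriented uniformly in G^σ, then every cycle of G is oriented uniformly in G^σ, and consequently Sp_S(G^σ) = i·Sp(G). -/
open Matrix

def IsCycle {V : Type*} (G : SimpleGraph V) {m : ℕ} (c : ZMod m → V) : Prop :=
  3 ≤ m ∧ Function.Injective c ∧ ∀ k : ZMod m, G.Adj (c k) (c (k + 1))

/-- The cycle `c` is chordless: no edge of `G` joins two non-consecutive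
vertices of the cycle. -/
def Chordless {V : Type*} (G : SimpleGraph V) {m : ℕ} (c : ZMod m → V) : Prop :=
  ∀ k k' : ZMod m, k ≠ k' → k' ≠ k + 1 → k ≠ k' + 1 → ¬ G.Adj (c k) (c k')

noncomputable def clockwiseArcs {V : Type*} {m : ℕ} [NeZero m]
    (S : Matrix V V ℝ) (c : ZMod m → V) : ℕ :=
  (Finset.univ.filter (fun k : ZMod m => S (c k) (c (k + 1)) = 1)).card

def UniformCycle {V : Type*} {m : ℕ} [NeZero m]
    (S : Matrix V V ℝ) (c : ZMod m → V) : Prop :=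
  clockwiseArcs S c ≡ m / 2 [MOD 2]

set_option linter.unusedSectionVars false
set_option maxHeartbeats 1000000

lemma neg_one_pow_eq_iff_modeq (a b : ℕ) : ((-1 : ℝ)^a = (-1)^b) ↔ a ≡ b [MOD 2] := by
  have h : ∀ n : ℕ, ((-1 : ℝ))^n = (-1)^(n % 2) := by
    intro n
    conv_lhs => rw [← Nat.div_add_mod n 2]
    rw [pow_add, pow_mul]
    norm_num
  rw [h a, h b, Nat.ModEq]
  rcases Nat.mod_two_eq_zero_or_one a with ha | ha <;>
    rcases Nat.mod_two_eq_zero_or_one b with hb | hb <;> rw [ha, hb] <;> norm_num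

lemma zmod_prod {M : Type*} [CommMonoid M] {m : ℕ} [NeZero m] (f : ZMod m → M) :
    ∏ k : ZMod m, f k = ∏ n ∈ Finset.range m, f (n : ZMod m) := by
  symm
  refine Finset.prod_nbij' (fun n => ((n : ℕ) : ZMod m)) (fun k => ZMod.val k) ?_ ?_ ?_ ?_ ?_
  · intro a _; exact Finset.mem_univ _
  · intro a _; exact Finset.mem_range.2 (ZMod.val_lt a)
  · intro a ha; exact ZMod.val_cast_of_lt (Finset.mem_range.1 ha)
  · intro a _; exact ZMod.natCast_rightInverse a
  · intro a _; rfl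

noncomputable def sprod {V : Type*} {m : ℕ} [NeZero m] (S : Matrix V V ℝ) (c : ZMod m → V) : ℝ :=
  ∏ k : ZMod m, S (c k) (c (k + 1))

section
variable {V : Type*} [Fintype V] [DecidableEq V]
  {G : SimpleGraph V} {X : Finset V} {S : Matrix V V ℝ}

lemma cycle_even (hbip : ∀ i j, G.Adj i j → (i ∈ X ↔ j ∉ X))
    {m : ℕ} (c : ZMod m → V) (hc : IsCycle G c) : Even m := by
  have key : ∀ n : ℕ, ((c (n : ZMod m) ∈ X) ↔ ((c 0 ∈ X) ↔ Even n)) := by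
    intro n; induction n with
    | zero => simp
    | succ k ih =>
      have h := hbip _ _ (hc.2.2 (k : ZMod m))
      push_cast
      rw [Nat.even_add_one]
      tauto
  have h0 := key m
  rw [ZMod.natCast_self] at h0
  by_cases hx : c 0 ∈ X <;> simp [hx] at h0 <;> tauto

lemma uniform_iff (hS : IsSkewAdj G S) {m : ℕ} [NeZero m] {c : ZMod m → V}
    (hc : IsCycle G c) (hm : Even m) :
    UniformCycle S c ↔ sprod S c = (-1 : ℝ)^(m / 2) := by
  classical
  set p : ZMod m → Prop := fun k => S (c k) (c (k + 1)) = 1 with hp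
  have hsplit : sprod S c =
      (∏ k ∈ Finset.univ.filter p, S (c k) (c (k+1))) *
      (∏ k ∈ Finset.univ.filter (fun k => ¬ p k), S (c k) (c (k+1))) :=
    (Finset.prod_filter_mul_prod_filter_not _ _ _).symm
  have h1 : (∏ k ∈ Finset.univ.filter p, S (c k) (c (k+1))) = 1 :=
    Finset.prod_eq_one (fun k hk => (Finset.mem_filter.1 hk).2)
  have h2 : (∏ k ∈ Finset.univ.filter (fun k => ¬ p k), S (c k) (c (k+1)))
      = (-1 : ℝ) ^ (m - clockwiseArcs S c) := by
    rw [Finset.prod_congr rfl (g := fun _ => (-1:ℝ)) (fun k hk => ?_), Finset.prod_const]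
    · congr 1
      have hcard := Finset.card_filter_add_card_filter_not (s := (Finset.univ : Finset (ZMod m))) (p := p)
      simp only [Finset.card_univ, ZMod.card] at hcard
      have : clockwiseArcs S c = (Finset.univ.filter p).card := rfl
      omega
    · have hne := (Finset.mem_filter.1 hk).2
      rcases hS.1 _ _ (hc.2.2 k) with h | h
      · exact absurd h hne
      · exact h
  have harcs : clockwiseArcs S c ≤ m := by
    have := Finset.card_filter_le (Finset.univ : Finset (ZMod m)) p
    simpa [clockwiseArcs, Finset.card_univ, ZMod.card] using this
  rw [UniformCycle, hsplit, h1, h2, one_mul, neg_one_pow_eq_iff_modeq]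
  unfold Nat.ModEq
  obtain ⟨a, ha⟩ := hm
  omega
end
section
variable {V : Type*} [Fintype V] [DecidableEq V]
  {G : SimpleGraph V} {X : Finset V} {S : Matrix V V ℝ}

lemma all_cycles (hbip : ∀ i j, G.Adj i j → (i ∈ X ↔ j ∉ X)) (hS : IsSkewAdj G S)
    (hch : ∀ (m : ℕ) [NeZero m] (c : ZMod m → V),
      IsCycle G c → Chordless G c → UniformCycle S c) :
    ∀ (m : ℕ) [NeZero m] (c : ZMod m → V), IsCycle G c → sprod S c = (-1 : ℝ)^(m/2) := by
  intro m
  induction m using Nat.strong_induction_on with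
  | _ m IH =>
  intro _ c hc
  by_cases hcl : Chordless G c
  · exact (uniform_iff hS hc (cycle_even hbip c hc)).1 (hch m c hc hcl)
  simp only [Chordless, not_forall, not_not] at hcl
  obtain ⟨k, k', h1, h2, h3, h4⟩ := hcl
  have hm3 : 3 ≤ m := hc.1
  -- rotate the cycle so the chord starts at 0
  set d : ZMod m → V := fun t => c (t + k) with hd
  have hd_cyc : IsCycle G d := by
    refine ⟨hc.1, hc.2.1.comp (fun a b hab => by simpa using hab), fun t => ?_⟩
    have := hc.2.2 (t + k)
    simpa [hd, add_right_comm] using this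
  have hd_prod : sprod S d = sprod S c := by
    unfold sprod
    refine Fintype.prod_equiv (Equiv.addRight k) _ _ (fun t => ?_)
    simp [hd, Equiv.coe_addRight, add_right_comm]
  set j : ℕ := (k' - k).val with hj
  have hj0 : ((j : ZMod m)) = k' - k := ZMod.natCast_rightInverse _
  have hd_adj : G.Adj (d 0) (d (j : ZMod m)) := by
    have hkk : ((j : ZMod m) + k) = k' := by rw [hj0]; ring
    simpa [hd, hkk] using h4
  have hjlt : j < m := ZMod.val_lt _
  have hjne0 : j ≠ 0 := by
    intro h
    apply h1
    have h5 : (k' - k : ZMod m) = 0 := by rw [← hj0, h]; simp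
    have : k' = k := by linear_combination (norm := ring_nf) h5
    exact this.symm
  have hjne1 : j ≠ 1 := by
    intro h
    apply h2
    have h5 : (k' - k : ZMod m) = 1 := by rw [← hj0, h]; simp
    linear_combination (norm := ring_nf) h5
  have hjnem1 : j ≠ m - 1 := by
    intro h
    apply h3
    have h5 : ((m - 1 : ℕ) : ZMod m) + 1 = 0 := by
      have : ((m - 1 : ℕ) : ZMod m) + 1 = ((m - 1 + 1 : ℕ) : ZMod m) := by push_cast; ring
      rw [this, Nat.sub_add_cancel (by omega), ZMod.natCast_self]
    have h6 : (k' - k : ZMod m) + 1 = 0 := by rw [← hj0, h]; exact h5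
    linear_combination (norm := ring_nf) -h6
  have hj2 : 2 ≤ j := by omega
  have hjm2 : j ≤ m - 2 := by omega
  -- the two sub-cycles
  haveI : NeZero (j + 1) := ⟨by omega⟩
  haveI : NeZero (m - j + 1) := ⟨by omega⟩
  set c1 : ZMod (j + 1) → V := fun t => d ((t.val : ZMod m)) with hc1
  set c2 : ZMod (m - j + 1) → V := fun t => d ((j : ZMod m) + (t.val : ZMod m)) with hc2
  have hm1m : j + 1 < m := by omega
  have hm2m : m - j + 1 < m := by omega
  have hval1 : ∀ n : ℕ, n < j + 1 → ((n : ZMod (j+1))).val = n :=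
    fun n hn => ZMod.val_cast_of_lt hn
  have hval2 : ∀ n : ℕ, n < m - j + 1 → ((n : ZMod (m-j+1))).val = n :=
    fun n hn => ZMod.val_cast_of_lt hn
  -- c1 is a cycle
  have hc1_cyc : IsCycle G c1 := by
    refine ⟨by omega, fun a b hab => ?_, fun t => ?_⟩
    · have := hd_cyc.2.1 hab
      have hvv : a.val = b.val := by
        have h5 := congrArg ZMod.val this
        rwa [ZMod.val_cast_of_lt (lt_trans a.val_lt hm1m),
          ZMod.val_cast_of_lt (lt_trans b.val_lt hm1m)] at h5
      exact ZMod.val_injective _ hvv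
    · rcases Nat.lt_or_ge t.val j with hlt | hge
      · have ht1 : (t + 1).val = t.val + 1 := by
          have : (t + 1 : ZMod (j+1)) = ((t.val + 1 : ℕ) : ZMod (j+1)) := by
            push_cast [ZMod.natCast_val, ZMod.cast_id]; ring
          rw [this, hval1 _ (by omega)]
        have h6 := hd_cyc.2.2 ((t.val : ZMod m))
        simp only [hc1, ht1]
        convert h6 using 2
        push_cast; ring
      · have htj : t.val = j := by have := t.val_lt; omega
        have ht1 : (t + 1 : ZMod (j+1)) = 0 := by
          have h5 : (t + 1 : ZMod (j+1)) = ((t.val + 1 : ℕ) : ZMod (j+1)) := by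
            push_cast [ZMod.natCast_val, ZMod.cast_id]; ring
          rw [h5, htj, ZMod.natCast_self]
        rw [ht1]
        simp only [hc1, htj]
        have hz : ((0 : ZMod (j+1))).val = 0 := rfl
        rw [hz]
        exact (by simpa using hd_adj.symm)
  -- c2 is a cycle
  have hc2_cyc : IsCycle G c2 := by
    refine ⟨by omega, fun a b hab => ?_, fun t => ?_⟩
    · have h5 := hd_cyc.2.1 hab
      have h6 : ((a.val : ZMod m)) = ((b.val : ZMod m)) := add_left_cancel h5
      have hvv : a.val = b.val := by
        have h7 := congrArg ZMod.val h6
        rwa [ZMod.val_cast_of_lt (lt_trans a.val_lt hm2m),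
          ZMod.val_cast_of_lt (lt_trans b.val_lt hm2m)] at h7
      exact ZMod.val_injective _ hvv
    · rcases Nat.lt_or_ge t.val (m - j) with hlt | hge
      · have ht1 : (t + 1).val = t.val + 1 := by
          have h5 : (t + 1 : ZMod (m-j+1)) = ((t.val + 1 : ℕ) : ZMod (m-j+1)) := by
            push_cast [ZMod.natCast_val, ZMod.cast_id]; ring
          rw [h5, hval2 _ (by omega)]
        have h6 := hd_cyc.2.2 ((j : ZMod m) + (t.val : ZMod m))
        simp only [hc2, ht1]
        convert h6 using 2
        push_cast; ring
      · have htj : t.val = m - j := by have := t.val_lt; omega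
        have ht1 : (t + 1 : ZMod (m-j+1)) = 0 := by
          have h5 : (t + 1 : ZMod (m-j+1)) = ((t.val + 1 : ℕ) : ZMod (m-j+1)) := by
            push_cast [ZMod.natCast_val, ZMod.cast_id]; ring
          rw [h5, htj]
          have h6 : ((m - j + 1 : ℕ) : ZMod (m-j+1)) = 0 := ZMod.natCast_self _
          rw [← h6]
        rw [ht1]
        simp only [hc2, htj]
        have hz : ((0 : ZMod (m-j+1))).val = 0 := rfl
        rw [hz]
        have he1 : (j : ZMod m) + ((m - j : ℕ) : ZMod m) = 0 := by
          have : (j : ZMod m) + ((m - j : ℕ) : ZMod m) = ((j + (m - j) : ℕ) : ZMod m) := by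
            push_cast; ring
          rw [this, Nat.add_sub_cancel' (by omega), ZMod.natCast_self]
        have he2 : (j : ZMod m) + ((0 : ℕ) : ZMod m) = (j : ZMod m) := by push_cast; ring
        rw [he1, he2]
        exact hd_adj
  -- the three product computations
  set P : ℕ → ℝ := fun n => S (d (n : ZMod m)) (d ((n : ZMod m) + 1)) with hP
  have claim1 : sprod S c1 = (∏ n ∈ Finset.range j, P n) * S (d (j : ZMod m)) (d 0) := by
    rw [sprod, zmod_prod, Finset.prod_range_succ]
    congr 1
    · refine Finset.prod_congr rfl (fun n hn => ?_)
      have hn' := Finset.mem_range.1 hn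
      have e1 : c1 ((n : ZMod (j+1))) = d ((n : ZMod m)) := by
        simp only [hc1, hval1 n (by omega)]
      have e2 : c1 ((n : ZMod (j+1)) + 1) = d ((n : ZMod m) + 1) := by
        have h5 : ((n : ZMod (j+1)) + 1) = (((n + 1 : ℕ)) : ZMod (j+1)) := by push_cast; ring
        rw [h5]
        simp only [hc1, hval1 (n + 1) (by omega)]
        congr 1
        push_cast; ring
      rw [e1, e2]
    · have e1 : c1 ((j : ZMod (j+1))) = d ((j : ZMod m)) := by
        simp only [hc1, hval1 j (by omega)]
      have e2 : c1 ((j : ZMod (j+1)) + 1) = d 0 := by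
        have h5 : ((j : ZMod (j+1)) + 1) = (((j + 1 : ℕ)) : ZMod (j+1)) := by push_cast; ring
        rw [h5, ZMod.natCast_self]
        simp only [hc1]
        norm_num
      rw [e1, e2]
  have claim2 : sprod S c2 =
      (∏ n ∈ Finset.range (m - j), P (j + n)) * S (d 0) (d ((j : ZMod m))) := by
    rw [sprod, zmod_prod, Finset.prod_range_succ]
    congr 1
    · refine Finset.prod_congr rfl (fun n hn => ?_)
      have hn' := Finset.mem_range.1 hn
      have e1 : c2 ((n : ZMod (m-j+1))) = d (((j + n : ℕ)) : ZMod m) := by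
        simp only [hc2, hval2 n (by omega)]
        congr 1
        push_cast; ring
      have e2 : c2 ((n : ZMod (m-j+1)) + 1) = d ((((j + n : ℕ)) : ZMod m) + 1) := by
        have h5 : ((n : ZMod (m-j+1)) + 1) = (((n + 1 : ℕ)) : ZMod (m-j+1)) := by push_cast; ring
        rw [h5]
        simp only [hc2, hval2 (n + 1) (by omega)]
        congr 1
        push_cast; ring
      rw [e1, e2]
    · have e1 : c2 (((m - j : ℕ)) : ZMod (m-j+1)) = d 0 := by
        simp only [hc2, hval2 (m - j) (by omega)]
        have he1 : (j : ZMod m) + ((m - j : ℕ) : ZMod m) = 0 := by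
          have h6 : (j : ZMod m) + ((m - j : ℕ) : ZMod m) = ((j + (m - j) : ℕ) : ZMod m) := by
            push_cast; ring
          rw [h6, Nat.add_sub_cancel' (by omega), ZMod.natCast_self]
        rw [he1]
      have e2 : c2 ((((m - j : ℕ)) : ZMod (m-j+1)) + 1) = d ((j : ZMod m)) := by
        have h5 : ((((m - j : ℕ)) : ZMod (m-j+1)) + 1) = (((m - j + 1 : ℕ)) : ZMod (m-j+1)) := by
          push_cast; ring
        rw [h5, ZMod.natCast_self]
        simp only [hc2]
        norm_num
      rw [e1, e2]
  have claim3 : sprod S d =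
      (∏ n ∈ Finset.range j, P n) * (∏ n ∈ Finset.range (m - j), P (j + n)) := by
    rw [sprod, zmod_prod]
    rw [show (Finset.range m) = Finset.range (j + (m - j)) by congr 1; omega]
    rw [Finset.prod_range_add]
  -- chord edge contributes -1
  have hx := hS.1 _ _ hd_adj
  have hskew : S (d ((j : ZMod m))) (d 0) = - S (d 0) (d ((j : ZMod m))) := by
    have h5 := congrFun (congrFun hS.2.2 (d 0)) (d ((j : ZMod m)))
    simpa [Matrix.transpose_apply] using h5
  have hprod_chord : S (d ((j : ZMod m))) (d 0) * S (d 0) (d ((j : ZMod m))) = -1 := by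
    rw [hskew]
    rcases hx with h | h <;> rw [h] <;> norm_num
  have key : sprod S c1 * sprod S c2 = - sprod S d := by
    rw [claim1, claim2, claim3]
    calc ((∏ n ∈ Finset.range j, P n) * S (d ((j : ZMod m))) (d 0)) *
        ((∏ n ∈ Finset.range (m - j), P (j + n)) * S (d 0) (d ((j : ZMod m))))
        = ((∏ n ∈ Finset.range j, P n) * (∏ n ∈ Finset.range (m - j), P (j + n))) *
          (S (d ((j : ZMod m))) (d 0) * S (d 0) (d ((j : ZMod m)))) := by ring
      _ = - ((∏ n ∈ Finset.range j, P n) * (∏ n ∈ Finset.range (m - j), P (j + n))) := by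
          rw [hprod_chord]; ring
  have key2 : sprod S d = - (sprod S c1 * sprod S c2) := by linarith
  -- finish with induction hypothesis and parity arithmetic
  have IH1 := IH (j + 1) hm1m c1 hc1_cyc
  have IH2 := IH (m - j + 1) hm2m c2 hc2_cyc
  obtain ⟨a, ha⟩ := cycle_even hbip c hc
  obtain ⟨b, hb⟩ := cycle_even hbip c1 hc1_cyc
  obtain ⟨e, he⟩ := cycle_even hbip c2 hc2_cyc
  have hbe : b + e = a + 1 := by omega
  have hma : m / 2 = a := by omega
  have hm1b : (j + 1) / 2 = b := by omega
  have hm2e : (m - j + 1) / 2 = e := by omega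
  rw [← hd_prod, key2, IH1, IH2, hma, hm1b, hm2e, ← pow_add, hbe, pow_succ]
  ring
end
noncomputable def wgain {V : Type*} (S : Matrix V V ℝ) {H : SimpleGraph V} :
    ∀ {u v : V}, H.Walk u v → ℂ
  | _, _, SimpleGraph.Walk.nil => 1
  | _, _, SimpleGraph.Walk.cons (u := a) (v := b) _ p =>
      (-Complex.I * (S a b : ℝ)) * wgain S p

@[simp] lemma wgain_nil {V : Type*} (S : Matrix V V ℝ) {H : SimpleGraph V} {u : V} :
    wgain S (SimpleGraph.Walk.nil : H.Walk u u) = 1 := rfl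

@[simp] lemma wgain_cons {V : Type*} (S : Matrix V V ℝ) {H : SimpleGraph V} {u v w : V}
    (h : H.Adj u v) (p : H.Walk v w) :
    wgain S (SimpleGraph.Walk.cons h p) = (-Complex.I * (S u v : ℝ)) * wgain S p := rfl

lemma wgain_telescope {V : Type*} {S : Matrix V V ℝ} {H : SimpleGraph V} {f : V → ℂ}
    (hf : ∀ a b, H.Adj a b → f a = (-Complex.I * (S a b : ℝ)) * f b) :
    ∀ {u v : V} (p : H.Walk u v), f u = wgain S p * f v := by
  intro u v p
  induction p with
  | nil => simp
  | cons h p ih =>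
    rw [wgain_cons, mul_assoc, ← ih]
    exact hf _ _ h

lemma wgain_eq_prod {V : Type*} (S : Matrix V V ℝ) {H : SimpleGraph V} {u v : V}
    (p : H.Walk u v) :
    wgain S p = ∏ n ∈ Finset.range p.length,
      (-Complex.I * (S (p.getVert n) (p.getVert (n+1)) : ℝ)) := by
  induction p with
  | nil => simp
  | cons h p ih =>
    rw [wgain_cons, SimpleGraph.Walk.length_cons, Finset.prod_range_succ', ih]
    simp only [SimpleGraph.Walk.getVert_cons_succ]
    rw [mul_comm]
    congr 1
    simp [SimpleGraph.Walk.getVert_zero]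

lemma getVert_inj_of_isPath {V : Type*} {H : SimpleGraph V} {u v : V} {p : H.Walk u v}
    (hp : p.IsPath) : ∀ {a b : ℕ}, a ≤ p.length → b ≤ p.length →
      p.getVert a = p.getVert b → a = b := by
  induction p with
  | nil => intro a b ha hb _; simp at ha hb; omega
  | cons h q ih =>
    rw [SimpleGraph.Walk.cons_isPath_iff] at hp
    intro a b ha hb hab
    match a, b with
    | 0, 0 => rfl
    | 0, b + 1 =>
      exfalso
      apply hp.2
      rw [SimpleGraph.Walk.mem_support_iff_exists_getVert]
      refine ⟨b, ?_, ?_⟩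
      · rw [show q.getVert b = (SimpleGraph.Walk.cons h q).getVert (b+1) from rfl, ← hab]; rfl
      · simpa using hb
    | a + 1, 0 =>
      exfalso
      apply hp.2
      rw [SimpleGraph.Walk.mem_support_iff_exists_getVert]
      refine ⟨a, ?_, ?_⟩
      · rw [show q.getVert a = (SimpleGraph.Walk.cons h q).getVert (a+1) from rfl, hab]; rfl
      · simpa using ha
    | a + 1, b + 1 =>
      have := ih hp.1 (by simpa using ha) (by simpa using hb) (by simpa using hab)
      omega
section
variable {V : Type*} [Fintype V] [DecidableEq V]
  {G H : SimpleGraph V} {X : Finset V} {S : Matrix V V ℝ}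

lemma path_cycle_gain (hbip : ∀ i j, G.Adj i j → (i ∈ X ↔ j ∉ X))
    (hAll : ∀ (m : ℕ) [NeZero m] (c : ZMod m → V), IsCycle G c → sprod S c = (-1 : ℝ)^(m/2))
    (hHG : H ≤ G) {u v : V} (p : H.Walk u v) (hp : p.IsPath) (hlen : 2 ≤ p.length)
    (hadj : G.Adj v u) :
    wgain S p * (-Complex.I * (S v u : ℝ)) = 1 := by
  set l : ℕ := p.length with hl
  haveI : NeZero (l + 1) := ⟨by omega⟩
  set c : ZMod (l + 1) → V := fun t => p.getVert t.val with hcdef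
  have hval : ∀ n : ℕ, n < l + 1 → ((n : ZMod (l+1))).val = n := fun n hn => ZMod.val_cast_of_lt hn
  have hc : IsCycle G c := by
    refine ⟨by omega, fun a b hab => ?_, fun t => ?_⟩
    · have h5 : a.val = b.val :=
        getVert_inj_of_isPath hp (by have := a.val_lt; omega) (by have := b.val_lt; omega) hab
      exact ZMod.val_injective _ h5
    · rcases Nat.lt_or_ge t.val l with hlt | hge
      · have ht1 : (t + 1).val = t.val + 1 := by
          have h5 : (t + 1 : ZMod (l+1)) = ((t.val + 1 : ℕ) : ZMod (l+1)) := by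
            push_cast [ZMod.natCast_val, ZMod.cast_id]; ring
          rw [h5, hval _ (by omega)]
        simp only [hcdef, ht1]
        exact hHG (p.adj_getVert_succ hlt)
      · have htl : t.val = l := by have := t.val_lt; omega
        have ht1 : (t + 1 : ZMod (l+1)) = 0 := by
          have h5 : (t + 1 : ZMod (l+1)) = ((t.val + 1 : ℕ) : ZMod (l+1)) := by
            push_cast [ZMod.natCast_val, ZMod.cast_id]; ring
          rw [h5, htl, ZMod.natCast_self]
        rw [ht1]
        simp only [hcdef, htl]
        have hz : ((0 : ZMod (l+1))).val = 0 := rfl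
        rw [hz]
        rw [SimpleGraph.Walk.getVert_zero, hl, SimpleGraph.Walk.getVert_length]
        exact hadj
  have hsp : sprod S c =
      (∏ n ∈ Finset.range l, S (p.getVert n) (p.getVert (n+1))) * S v u := by
    rw [sprod, zmod_prod, Finset.prod_range_succ]
    congr 1
    · refine Finset.prod_congr rfl (fun n hn => ?_)
      have hn' := Finset.mem_range.1 hn
      have e1 : c ((n : ZMod (l+1))) = p.getVert n := by
        simp only [hcdef, hval n (by omega)]
      have e2 : c ((n : ZMod (l+1)) + 1) = p.getVert (n + 1) := by
        have h5 : ((n : ZMod (l+1)) + 1) = (((n + 1 : ℕ)) : ZMod (l+1)) := by push_cast; ring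
        rw [h5]
        simp only [hcdef, hval (n + 1) (by omega)]
      rw [e1, e2]
    · have e1 : c ((l : ZMod (l+1))) = v := by
        simp only [hcdef, hval l (by omega)]
        rw [hl, SimpleGraph.Walk.getVert_length]
      have e2 : c ((l : ZMod (l+1)) + 1) = u := by
        have h5 : ((l : ZMod (l+1)) + 1) = (((l + 1 : ℕ)) : ZMod (l+1)) := by push_cast; ring
        rw [h5, ZMod.natCast_self]
        simp only [hcdef]
        have hz : ((0 : ZMod (l+1))).val = 0 := rfl
        rw [hz, SimpleGraph.Walk.getVert_zero]
      rw [e1, e2]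
  obtain ⟨a, haa⟩ := cycle_even hbip c hc
  have hval_sprod := hAll (l + 1) c hc
  have hdiv : (l + 1) / 2 = a := by omega
  rw [hdiv] at hval_sprod
  have hprod : wgain S p * (-Complex.I * (S v u : ℝ)) =
      (-Complex.I)^(l+1) * ((sprod S c : ℝ) : ℂ) := by
    rw [wgain_eq_prod, hsp]
    rw [Finset.prod_mul_distrib, Finset.prod_const, Finset.card_range]
    push_cast
    ring
  rw [hprod, hval_sprod, haa]
  push_cast
  rw [pow_add, ← mul_pow, ← mul_pow,
    show (-Complex.I * -Complex.I * (-1:ℂ)) = 1 by simp [Complex.I_mul_I], one_pow]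
end
section
variable {V : Type*} [Fintype V] [DecidableEq V]
  {G : SimpleGraph V} {X : Finset V} {S : Matrix V V ℝ}

lemma exists_gauge (hbip : ∀ i j, G.Adj i j → (i ∈ X ↔ j ∉ X)) (hS : IsSkewAdj G S)
    (hAll : ∀ (m : ℕ) [NeZero m] (c : ZMod m → V), IsCycle G c → sprod S c = (-1 : ℝ)^(m/2)) :
    ∃ f : V → ℂ, (∀ w, f w ≠ 0) ∧
      ∀ a b, G.Adj a b → f a = (-Complex.I * (S a b : ℝ)) * f b := by
  classical
  have hgg : ∀ a b, G.Adj a b →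
      (-Complex.I * (S a b : ℝ)) * (-Complex.I * (S b a : ℝ)) = 1 := by
    intro a b hab
    have hskew : S b a = - S a b := by
      have h5 := congrFun (congrFun hS.2.2 a) b
      simpa [Matrix.transpose_apply] using h5
    rcases hS.1 a b hab with h | h <;> rw [hskew, h] <;> push_cast <;>
      ring_nf <;> simp [Complex.I_sq]
  have hsne : ∀ a b, G.Adj a b → (-Complex.I * (S a b : ℝ)) ≠ 0 := by
    intro a b hab
    apply mul_ne_zero (neg_ne_zero.2 Complex.I_ne_zero)
    rcases hS.1 a b hab with h | h <;> rw [h] <;> norm_num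
  have hrev : ∀ (g : V → ℂ), ∀ a b, G.Adj a b →
      g a = (-Complex.I * (S a b : ℝ)) * g b → g b = (-Complex.I * (S b a : ℝ)) * g a := by
    intro g a b hab habg
    rw [habg, ← mul_assoc, mul_comm (-Complex.I * (S b a : ℝ)), hgg a b hab, one_mul]
  suffices h : ∀ (n : ℕ) (H : SimpleGraph V), H ≤ G → H.edgeSet.ncard = n →
      ∃ f : V → ℂ, (∀ w, f w ≠ 0) ∧
        ∀ a b, H.Adj a b → f a = (-Complex.I * (S a b : ℝ)) * f b by
    exact h _ G le_rfl rfl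
  intro n
  induction n using Nat.strong_induction_on with
  | _ n IH =>
  intro H hHG hcard
  rcases Nat.eq_zero_or_pos n with h0 | hpos
  · refine ⟨fun _ => 1, fun _ => one_ne_zero, fun a b hab => ?_⟩
    exfalso
    have hemp : H.edgeSet = ∅ := (Set.ncard_eq_zero (Set.toFinite _)).1 (by omega)
    have := (SimpleGraph.mem_edgeSet H).2 hab
    rw [hemp] at this
    exact this
  have hne : H.edgeSet.Nonempty := by
    rw [Set.nonempty_iff_ne_empty]
    intro hemp
    rw [hemp, Set.ncard_empty] at hcard
    omega
  obtain ⟨e, he⟩ := hne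
  induction e using Sym2.ind with
  | _ u v =>
  have huv : H.Adj u v := (SimpleGraph.mem_edgeSet H).1 he
  have hGuv : G.Adj u v := hHG huv
  set H' : SimpleGraph V := H.deleteEdges {s(u, v)} with hH'
  have hH'le : H' ≤ H := SimpleGraph.deleteEdges_le _
  have hH'G : H' ≤ G := le_trans hH'le hHG
  have hcard' : H'.edgeSet.ncard = n - 1 := by
    rw [hH', SimpleGraph.edgeSet_deleteEdges,
      Set.ncard_diff_singleton_of_mem he, hcard]
  obtain ⟨f, hf0, hf⟩ := IH (n - 1) (by omega) H' hH'G hcard'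
  have hH'adj : ∀ a b, H.Adj a b → s(a, b) ≠ s(u, v) → H'.Adj a b := by
    intro a b hab hne
    rw [hH', SimpleGraph.deleteEdges_adj]
    exact ⟨hab, by simpa using hne⟩
  by_cases hreach : H'.Reachable u v
  · refine ⟨f, hf0, ?_⟩
    have hmain : f u = (-Complex.I * (S u v : ℝ)) * f v := by
      obtain ⟨q⟩ := hreach
      have hp : q.bypass.IsPath := q.bypass_isPath
      set p := q.bypass with hpb
      have hlen2 : 2 ≤ p.length := by
        rcases Nat.lt_or_ge p.length 2 with hl2 | hl2
        · exfalso
          interval_cases hc : p.length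
          · exact hGuv.ne (SimpleGraph.Walk.eq_of_length_eq_zero hc)
          · have hadj1 : H'.Adj (p.getVert 0) (p.getVert 1) :=
              p.adj_getVert_succ (by omega)
            rw [SimpleGraph.Walk.getVert_zero,
              show p.getVert 1 = p.getVert p.length by rw [hc],
              SimpleGraph.Walk.getVert_length] at hadj1
            rw [hH', SimpleGraph.deleteEdges_adj] at hadj1
            simp at hadj1
        · exact hl2
      have htel := wgain_telescope (S := S) (H := H') hf p
      have hcyc := path_cycle_gain hbip hAll hH'G p hp hlen2 hGuv.symm
      have hwg : wgain S p = (-Complex.I * (S u v : ℝ)) := by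
        calc wgain S p
            = wgain S p * ((-Complex.I * (S v u : ℝ)) * (-Complex.I * (S u v : ℝ))) := by
              rw [hgg v u hGuv.symm, mul_one]
          _ = (-Complex.I * (S u v : ℝ)) := by rw [← mul_assoc, hcyc, one_mul]
      rw [htel, hwg]
    intro a b hab
    by_cases heq : s(a, b) = s(u, v)
    · rcases Sym2.eq_iff.1 heq with ⟨rfl, rfl⟩ | ⟨rfl, rfl⟩
      · exact hmain
      · exact hrev f _ _ hGuv hmain
    · exact hf a b (hH'adj a b hab heq)
  · set C : ℂ := f u * ((-Complex.I * (S u v : ℝ)) * f v)⁻¹ with hC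
    have hxne : (-Complex.I * (S u v : ℝ)) * f v ≠ 0 := mul_ne_zero (hsne u v hGuv) (hf0 v)
    have hCne : C ≠ 0 := mul_ne_zero (hf0 u) (inv_ne_zero hxne)
    set g : V → ℂ := fun w => if H'.Reachable w v then C * f w else f w with hg
    have hg0 : ∀ w, g w ≠ 0 := by
      intro w
      by_cases hw : H'.Reachable w v <;> simp [hg, hw, hCne, hf0 w, mul_ne_zero hCne (hf0 w)]
    have hguv : g u = (-Complex.I * (S u v : ℝ)) * g v := by
      have hgu : g u = f u := by simp [hg, hreach]
      have hgv : g v = C * f v := by simp [hg, SimpleGraph.Reachable.refl v]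
      rw [hgu, hgv, hC]
      calc f u = f u * (((-Complex.I * (S u v : ℝ)) * f v) * ((-Complex.I * (S u v : ℝ)) * f v)⁻¹) := by
            rw [mul_inv_cancel₀ hxne, mul_one]
        _ = -Complex.I * (S u v : ℝ) * (f u * (-Complex.I * (S u v : ℝ) * f v)⁻¹ * f v) := by ring
    refine ⟨g, hg0, ?_⟩
    intro a b hab
    by_cases heq : s(a, b) = s(u, v)
    · rcases Sym2.eq_iff.1 heq with ⟨rfl, rfl⟩ | ⟨rfl, rfl⟩
      · exact hguv
      · exact hrev g _ _ hGuv hguv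
    · have hab' : H'.Adj a b := hH'adj a b hab heq
      have hiff : H'.Reachable a v ↔ H'.Reachable b v :=
        ⟨fun h => (hab'.reachable.symm).trans h, fun h => hab'.reachable.trans h⟩
      by_cases hav : H'.Reachable a v
      · have hbv := hiff.1 hav
        simp only [hg, hav, hbv, if_pos]
        rw [hf a b hab']
        ring
      · have hbv : ¬ H'.Reachable b v := fun h => hav (hiff.2 h)
        simp only [hg, hav, hbv, if_neg, not_false_iff]
        exact hf a b hab'
end
open Polynomial in
lemma charpoly_conj_diag {V : Type*} [Fintype V] [DecidableEq V]
    (f : V → ℂ) (hf0 : ∀ v, f v ≠ 0) (M : Matrix V V ℂ) :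
    (Matrix.diagonal f * M * Matrix.diagonal (fun v => (f v)⁻¹)).charpoly = M.charpoly := by
  classical
  set D' : Matrix V V ℂ[X] := Matrix.diagonal (fun v => (C (f v) : ℂ[X])) with hD'
  set E' : Matrix V V ℂ[X] := Matrix.diagonal (fun v => (C ((f v)⁻¹) : ℂ[X])) with hE'
  have hmapD : (Matrix.diagonal f).map (C : ℂ →+* ℂ[X]) = D' := by
    rw [Matrix.diagonal_map (map_zero _)]
  have hmapE : (Matrix.diagonal (fun v => (f v)⁻¹)).map (C : ℂ →+* ℂ[X]) = E' := by
    rw [Matrix.diagonal_map (map_zero _)]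
  have hDE : D' * E' = 1 := by
    rw [hD', hE', Matrix.diagonal_mul_diagonal]
    rw [show (fun v => (C (f v) : ℂ[X]) * C ((f v)⁻¹)) = fun _ => 1 from
      funext fun v => by rw [← C_mul, mul_inv_cancel₀ (hf0 v), C_1]]
    exact Matrix.diagonal_one
  have hscalar : D' * Matrix.scalar V (X : ℂ[X]) * E' = Matrix.scalar V (X : ℂ[X]) := by
    rw [Matrix.scalar_apply, hD', hE', Matrix.diagonal_mul_diagonal, Matrix.diagonal_mul_diagonal]
    refine congrArg Matrix.diagonal (funext fun v => ?_)
    rw [mul_comm (C (f v)) X, mul_assoc, ← C_mul, mul_inv_cancel₀ (hf0 v), C_1, mul_one]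
  have hkey : Matrix.charmatrix (Matrix.diagonal f * M * Matrix.diagonal (fun v => (f v)⁻¹))
      = D' * Matrix.charmatrix M * E' := by
    rw [Matrix.charmatrix, Matrix.charmatrix]
    rw [mul_sub, sub_mul]
    congr 1
    · exact hscalar.symm
    · simp only [RingHom.mapMatrix_apply]
      rw [Matrix.map_mul, Matrix.map_mul, hmapD, hmapE]
  rw [Matrix.charpoly, hkey, Matrix.det_mul, Matrix.det_mul, Matrix.charpoly]
  have hdet1 : D'.det * E'.det = 1 := by rw [← Matrix.det_mul, hDE, Matrix.det_one]
  calc D'.det * (Matrix.charmatrix M).det * E'.det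
      = (Matrix.charmatrix M).det * (D'.det * E'.det) := by ring
    _ = (Matrix.charmatrix M).det := by rw [hdet1, mul_one]

open Polynomial in
lemma roots_charpoly_I_smul {V : Type*} [Fintype V] [DecidableEq V] (A : Matrix V V ℂ) :
    (Matrix.charpoly (Complex.I • A)).roots
      = (Matrix.charpoly A).roots.map (fun z => Complex.I * z) := by
  classical
  set q := Matrix.charpoly A with hq
  have hmon := Matrix.charpoly_monic A
  have hsplits : q.Splits := IsAlgClosed.splits q
  have hcard : Multiset.card q.roots = Fintype.card V := by
    rw [(Polynomial.splits_iff_card_roots).1 hsplits, hq, Matrix.charpoly_natDegree_eq_dim]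
  have hfact : q = (q.roots.map (fun a => X - C a)).prod :=
    hsplits.eq_prod_roots_of_monic hmon
  set φ : ℂ[X] →+* ℂ[X] := eval₂RingHom C (C Complex.I⁻¹ * X) with hφ
  have hφX : φ X = C Complex.I⁻¹ * X := eval₂_X _ _
  have hφC : ∀ a : ℂ, φ (C a) = C a := fun a => eval₂_C _ _
  have hkey : Matrix.charmatrix (Complex.I • A)
      = (C Complex.I) • ((Matrix.charmatrix A).map φ) := by
    ext i j
    by_cases h : i = j
    · subst h
      simp only [Matrix.charmatrix_apply_eq, Matrix.smul_apply, Matrix.smul_apply,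
        Matrix.map_apply, smul_eq_mul]
      rw [map_sub, hφX, hφC]
      rw [mul_sub, ← mul_assoc, ← C_mul, mul_inv_cancel₀ Complex.I_ne_zero, C_1, one_mul, ← C_mul]
    · simp only [Matrix.smul_apply, Matrix.charmatrix_apply_ne _ _ _ h, Matrix.map_apply,
        smul_eq_mul]
      rw [map_neg, hφC, mul_neg, ← C_mul]
  have hdet : Matrix.charpoly (Complex.I • A)
      = (C Complex.I)^(Fintype.card V) * φ q := by
    rw [Matrix.charpoly, hkey, Matrix.det_smul,
      show A.charmatrix.map ⇑φ = φ.mapMatrix A.charmatrix from rfl, ← RingHom.map_det]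
    rfl
  have hφq : φ q = (C Complex.I⁻¹)^(Fintype.card V) *
      (q.roots.map (fun a => X - C (Complex.I * a))).prod := by
    conv_lhs => rw [hfact]
    rw [map_multiset_prod, Multiset.map_map]
    have hstep : ∀ a ∈ q.roots, (φ ∘ fun a => X - C a) a
        = (fun a => C Complex.I⁻¹ * (X - C (Complex.I * a))) a := by
      intro a _
      simp only [Function.comp]
      rw [map_sub, hφX, hφC, mul_sub, ← C_mul, ← mul_assoc,
        inv_mul_cancel₀ Complex.I_ne_zero, one_mul]
    rw [Multiset.map_congr rfl hstep]
    rw [show (fun a => C Complex.I⁻¹ * (X - C (Complex.I * a)))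
        = fun a => (fun _ : ℂ => (C Complex.I⁻¹ : ℂ[X])) a * (fun a => X - C (Complex.I * a)) a
      from rfl]
    rw [Multiset.prod_map_mul, Multiset.map_const', Multiset.prod_replicate, hcard]
  rw [hdet, hφq, ← mul_assoc, ← mul_pow, ← C_mul, mul_inv_cancel₀ Complex.I_ne_zero,
    C_1, one_pow, one_mul]
  rw [show q.roots.map (fun a => X - C (Complex.I * a))
      = (q.roots.map (fun a => Complex.I * a)).map (fun b => X - C b) by
    rw [Multiset.map_map]; rfl]
  rw [roots_multiset_prod_X_sub_C]

/-- If every chordless cycle of a bipartite graph is oriented uniformly, then every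
cycle is oriented uniformly, and consequently `Sp_S(G^σ) = i·Sp(G)`. -/
theorem chordless_uniform_implies_all_uniform
    {V : Type*} [Fintype V] [DecidableEq V]
    (G : SimpleGraph V) (X : Finset V)
    (hbip : ∀ i j, G.Adj i j → (i ∈ X ↔ j ∉ X))
    (S : Matrix V V ℝ) (hS : IsSkewAdj G S)
    (hchordless : ∀ (m : ℕ) [NeZero m] (c : ZMod m → V),
      IsCycle G c → Chordless G c → UniformCycle S c) :
    (∀ (m : ℕ) [NeZero m] (c : ZMod m → V), IsCycle G c → UniformCycle S c) ∧
    cSpec S = (adjSpec G).map (fun z => Complex.I * z) := by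
  classical
  have hAll := all_cycles hbip hS hchordless
  refine ⟨fun m _ c hc => (uniform_iff hS hc (cycle_even hbip c hc)).2 (hAll m c hc), ?_⟩
  obtain ⟨f, hf0, hf⟩ := exists_gauge hbip hS hAll
  set A : Matrix V V ℂ := G.adjMatrix ℂ with hA
  have hSmap : S.map Complex.ofReal =
      Matrix.diagonal f * (Complex.I • A) * Matrix.diagonal (fun v => (f v)⁻¹) := by
    ext a b
    rw [Matrix.mul_diagonal, Matrix.diagonal_mul, Matrix.smul_apply, Matrix.map_apply,
      smul_eq_mul]
    by_cases hadj : G.Adj a b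
    · rw [hA, SimpleGraph.adjMatrix_apply, if_pos hadj, hf a b hadj]
      have hfb := mul_inv_cancel₀ (hf0 b)
      symm
      rw [mul_one]
      calc (-Complex.I * ((S a b : ℝ) : ℂ) * f b) * Complex.I * (f b)⁻¹
          = (-Complex.I * Complex.I) * ((S a b : ℝ) : ℂ) * (f b * (f b)⁻¹) := by ring
        _ = ((S a b : ℝ) : ℂ) := by rw [hfb, mul_one]; simp [Complex.I_mul_I]
    · rw [hS.2.1 a b hadj, hA, SimpleGraph.adjMatrix_apply, if_neg hadj]
      simp
  have hcp : (S.map Complex.ofReal).charpoly = (Complex.I • A).charpoly := by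
    rw [hSmap]; exact charpoly_conj_diag f hf0 _
  have hroots := roots_charpoly_I_smul A
  have hadjspec : adjSpec G = (Matrix.charpoly A).roots := by
    unfold adjSpec
    rw [cSpec]
    congr 1
    rw [show (G.adjMatrix ℝ).map Complex.ofReal = A from by
      ext i j
      by_cases h : G.Adj i j <;>
        simp [hA, SimpleGraph.adjMatrix_apply, Matrix.map_apply, h]]
  have hadjmat : (G.adjMatrix ℝ).map Complex.ofReal = A := by
    ext i j
    by_cases h : G.Adj i j <;>
      simp [hA, SimpleGraph.adjMatrix_apply, Matrix.map_apply, h]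
  rw [cSpec, hcp, hroots, hadjspec]
end

section
/- Let H^τ be an oriented bipartite graph on m vertices with bipartition sizes m_1, m_2, so that S(H^τ) = [[0, B],[−B^T, 0]] in block form, and let G^σ be an oriented graph on n vertices. Let I' be the diagonal m×m matrix with first m_1 diagonal entries 1 and last m_2 entries −1. Let S = I' ⊗ S(G^σ) + S(H^τ) ⊗ I_n. Then S S^T = −(I_m ⊗ S(G^σ)² + S(H^τ)² ⊗ I_n). -/
open Matrix Kronecker

lemma neg_kron {p q r s : Type*} (A : Matrix p q ℝ) (C : Matrix r s ℝ) :
    (-A) ⊗ₖ C = -(A ⊗ₖ C) := by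
  ext ⟨i, j⟩ ⟨k, l⟩
  simp [Matrix.kroneckerMap]

lemma kron_neg {p q r s : Type*} (A : Matrix p q ℝ) (C : Matrix r s ℝ) :
    A ⊗ₖ (-C) = -(A ⊗ₖ C) := by
  ext ⟨i, j⟩ ⟨k, l⟩
  simp [Matrix.kroneckerMap]

/-- For a bipartite skew-adjacency matrix `Sh = [[0, B], [-Bᵀ, 0]]`, a skew-symmetric
matrix `Sg`, and `I' = diag(I, -I)`, the matrix `S = I' ⊗ Sg + Sh ⊗ I` satisfies
`S Sᵀ = -(I ⊗ Sg² + Sh² ⊗ I)`. -/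
theorem product_orientation_SSt
    (m₁ m₂ n : ℕ)
    (B : Matrix (Fin m₁) (Fin m₂) ℝ)
    (Sg : Matrix (Fin n) (Fin n) ℝ) (hSg : Sgᵀ = -Sg) :
    let Sh : Matrix (Fin m₁ ⊕ Fin m₂) (Fin m₁ ⊕ Fin m₂) ℝ :=
      Matrix.fromBlocks 0 B (-Bᵀ) 0
    let I' : Matrix (Fin m₁ ⊕ Fin m₂) (Fin m₁ ⊕ Fin m₂) ℝ :=
      Matrix.fromBlocks 1 0 0 (-1)
    let S := I' ⊗ₖ Sg + Sh ⊗ₖ (1 : Matrix (Fin n) (Fin n) ℝ)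
    S * Sᵀ =
      -((1 : Matrix (Fin m₁ ⊕ Fin m₂) (Fin m₁ ⊕ Fin m₂) ℝ) ⊗ₖ (Sg * Sg) +
        (Sh * Sh) ⊗ₖ (1 : Matrix (Fin n) (Fin n) ℝ)) := by
  intro Sh I' S
  have hSh : Shᵀ = -Sh := by
    ext (i|i) (j|j) <;> simp [Sh, Matrix.fromBlocks]
  have hI' : I'ᵀ = I' := by
    ext (i|i) (j|j) <;> simp [I', Matrix.fromBlocks, Matrix.one_apply, eq_comm]
  have hI'sq : I' * I' = 1 := by
    simp only [I', Matrix.fromBlocks_multiply]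
    simp [← Matrix.fromBlocks_one]
  have hanti : I' * Sh = -(Sh * I') := by
    simp only [I', Sh, Matrix.fromBlocks_multiply]
    ext (i|i) (j|j) <;> simp [Matrix.fromBlocks]
  have hST : Sᵀ = -S := by
    simp only [S, Matrix.transpose_add, ← Matrix.kroneckerMap_transpose, hSg, hSh, hI',
      Matrix.transpose_one, neg_kron, kron_neg]
    abel
  rw [hST, Matrix.mul_neg]
  congr 1
  simp only [S, add_mul, mul_add, ← Matrix.mul_kronecker_mul, hI'sq, Matrix.one_mul,
    Matrix.mul_one, hanti, neg_kron]
  abel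
end

section
/- Let A be an m×m real skew-symmetric matrix in block form [[0,B],[−B^T,0]] with B of size m_1×m_2 (m = m_1 + m_2), let C be an n×n real skew-symmetric matrix, and let I' = diag(I_{m_1}, −I_{m_2}). Then the matrix S = I' ⊗ C + A ⊗ I_n is skew-symmetric, and the eigenvalues of S S^T are exactly μ² + λ² where iμ ranges over eigenvalues of A and iλ over eigenvalues of C (with multiplicity). -/
open Matrix Kronecker Polynomial

lemma charmatrix_diagonal' {ι : Type*} [Fintype ι] [DecidableEq ι] (d : ι → ℂ) :
    charmatrix (Matrix.diagonal d) = Matrix.diagonal (fun i => (X : ℂ[X]) - C (d i)) := by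
  ext i j
  by_cases h : i = j
  · subst h; simp
  · simp [charmatrix_apply_ne _ _ _ h, Matrix.diagonal_apply_ne _ h]

lemma roots_charpoly_diagonal {ι : Type*} [Fintype ι] [DecidableEq ι] (d : ι → ℂ) :
    (Matrix.diagonal d).charpoly.roots = Finset.univ.val.map d := by
  rw [Matrix.charpoly, charmatrix_diagonal', Matrix.det_diagonal]
  rw [Finset.prod_eq_multiset_prod]
  have : (Finset.univ.val.map fun i => (X : ℂ[X]) - C (d i))
      = ((Finset.univ.val.map d).map fun a => (X : ℂ[X]) - C a) := by
    rw [Multiset.map_map]; rfl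
  rw [this, roots_multiset_prod_X_sub_C]

lemma charpoly_conj' {ι : Type*} [Fintype ι] [DecidableEq ι]
    (U M W : Matrix ι ι ℂ) (hUW : U * W = 1) :
    (U * M * W).charpoly = M.charpoly := by
  have hchar : ∀ N : Matrix ι ι ℂ,
      charmatrix N = Matrix.diagonal (fun _ => (X : ℂ[X])) - N.map C := by
    intro N; ext i j; rw [charmatrix_apply]; simp [Matrix.sub_apply]
  have hD : ∀ N : Matrix ι ι ℂ,
      N.map C * Matrix.diagonal (fun _ => (X : ℂ[X]))
        = Matrix.diagonal (fun _ => (X : ℂ[X])) * N.map C := by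
    intro N; ext i j; rw [Matrix.mul_diagonal, Matrix.diagonal_mul, mul_comm]
  have hmap1 : (1 : Matrix ι ι ℂ).map C = 1 := Matrix.map_one _ (map_zero C) (map_one C)
  have key : charmatrix (U * M * W) = U.map C * charmatrix M * W.map C := by
    rw [hchar, hchar, Matrix.mul_sub, Matrix.sub_mul]
    congr 1
    · rw [Matrix.mul_assoc, ← hD W, ← Matrix.mul_assoc, ← Matrix.map_mul, hUW, hmap1, one_mul]
    · rw [← Matrix.map_mul, ← Matrix.map_mul]
  unfold Matrix.charpoly
  rw [key, Matrix.det_mul, Matrix.det_mul, mul_right_comm, ← Matrix.det_mul, ← Matrix.map_mul,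
    hUW, hmap1, Matrix.det_one, one_mul]

lemma diag_kron {ι κ : Type*} [Fintype ι] [DecidableEq ι] [Fintype κ] [DecidableEq κ]
    (d : ι → ℂ) (e : κ → ℂ) :
    Matrix.diagonal d ⊗ₖ (1 : Matrix κ κ ℂ) + (1 : Matrix ι ι ℂ) ⊗ₖ Matrix.diagonal e
      = Matrix.diagonal (fun p : ι × κ => d p.1 + e p.2) := by
  ext ⟨i, k⟩ ⟨j, l⟩
  rcases eq_or_ne i j with rfl | hij <;> rcases eq_or_ne k l with rfl | hkl <;>
    simp [Matrix.kroneckerMap_apply, Matrix.one_apply, Matrix.diagonal_apply, Prod.ext_iff, *]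

lemma map_kron {l m n p : Type*} (A : Matrix l m ℝ) (B : Matrix n p ℝ) :
    (A ⊗ₖ B).map Complex.ofReal = A.map Complex.ofReal ⊗ₖ B.map Complex.ofReal := by
  ext ⟨i, k⟩ ⟨j, l⟩
  simp [Matrix.kroneckerMap_apply]

lemma map_ofReal_neg {ι κ : Type*} (M : Matrix ι κ ℝ) :
    (-M).map Complex.ofReal = -(M.map Complex.ofReal) := by
  ext i j; simp

lemma map_ofReal_add {ι κ : Type*} (M N : Matrix ι κ ℝ) :
    (M + N).map Complex.ofReal = M.map Complex.ofReal + N.map Complex.ofReal := by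
  ext i j; simp

lemma map_ofReal_mul {ι κ ρ : Type*} [Fintype κ] (M : Matrix ι κ ℝ) (N : Matrix κ ρ ℝ) :
    (M * N).map Complex.ofReal = M.map Complex.ofReal * N.map Complex.ofReal := by
  ext i j; simp [Matrix.mul_apply]

lemma map_ofReal_one {ι : Type*} [DecidableEq ι] :
    (1 : Matrix ι ι ℝ).map Complex.ofReal = 1 := by
  ext i j; by_cases h : i = j <;> simp [Matrix.one_apply, h]

/-- skew-symmetric real matrix: complexified version, diagonalization -/
lemma skew_diag {ι : Type*} [Fintype ι] [DecidableEq ι]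
    (A : Matrix ι ι ℝ) (hA : Aᵀ = -A) :
    ∃ (U : Matrix ι ι ℂ) (h : ι → ℝ),
      U * star U = 1 ∧ star U * U = 1 ∧
      A.map Complex.ofReal = U * Matrix.diagonal (fun k => -Complex.I * (h k : ℂ)) * star U := by
  set A' : Matrix ι ι ℂ := A.map Complex.ofReal with hA'def
  have hAentry : ∀ i j, A j i = - A i j := fun i j => by
    have := congrFun (congrFun hA i) j; simpa using this
  have hA'h : A'ᴴ = -A' := by
    ext i j
    simp [hA'def, Matrix.conjTranspose_apply, Matrix.map_apply, hAentry i j]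
  have hHA : (Complex.I • A').IsHermitian := by
    show (Complex.I • A')ᴴ = Complex.I • A'
    rw [Matrix.conjTranspose_smul, hA'h, Complex.star_def, Complex.conj_I, neg_smul, smul_neg,
      neg_neg]
  refine ⟨hHA.eigenvectorUnitary, hHA.eigenvalues,
    Matrix.mem_unitaryGroup_iff.mp hHA.eigenvectorUnitary.2,
    Matrix.mem_unitaryGroup_iff'.mp hHA.eigenvectorUnitary.2, ?_⟩
  have h1 : A' = (-Complex.I) • (Complex.I • A') := by
    rw [smul_smul]
    norm_num [Complex.I_mul_I]
  conv_lhs => rw [h1, hHA.spectral_theorem, Unitary.conjStarAlgAut_apply]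
  rw [← smul_mul_assoc]
  congr 1
  rw [← mul_smul_comm]
  congr 1
  ext i j
  rcases eq_or_ne i j with rfl | hij <;>
    simp [Matrix.diagonal_apply, RCLike.ofReal, *]

/-- Let `A = [[0, B], [-Bᵀ, 0]]` be skew-symmetric, `C` skew-symmetric and
`I' = diag(I, -I)`.  Then `S = I' ⊗ C + A ⊗ I` is skew-symmetric, and the eigenvalues
of `S Sᵀ` are exactly the values `μ² + λ²` where `iμ` ranges over the eigenvalues `α`
of `A` (so `μ² = -α²`) and `iλ` over the eigenvalues `β` of `C` (so `λ² = -β²`),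
with multiplicity. -/
theorem kronecker_skew_SSt_spectrum
    (m₁ m₂ n : ℕ)
    (B : Matrix (Fin m₁) (Fin m₂) ℝ)
    (C : Matrix (Fin n) (Fin n) ℝ) (hC : Cᵀ = -C) :
    let A : Matrix (Fin m₁ ⊕ Fin m₂) (Fin m₁ ⊕ Fin m₂) ℝ :=
      Matrix.fromBlocks 0 B (-Bᵀ) 0
    let I' : Matrix (Fin m₁ ⊕ Fin m₂) (Fin m₁ ⊕ Fin m₂) ℝ :=
      Matrix.fromBlocks 1 0 0 (-1)
    let S := I' ⊗ₖ C + A ⊗ₖ (1 : Matrix (Fin n) (Fin n) ℝ)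
    Sᵀ = -S ∧
    cSpec (S * Sᵀ) = (cSpec A).bind (fun α => (cSpec C).map (fun β => -α ^ 2 - β ^ 2)) := by
  intro A I' S
  have hAT : Aᵀ = -A := by
    ext (i | i) (j | j) <;> simp [A]
  have hIT : I'ᵀ = I' := by
    ext (i | i) (j | j) <;> simp [I', Matrix.one_apply, eq_comm]
  have hST : Sᵀ = -S := by
    show (I' ⊗ₖ C + A ⊗ₖ 1)ᵀ = -(I' ⊗ₖ C + A ⊗ₖ 1)
    rw [Matrix.transpose_add, ← Matrix.kroneckerMap_transpose, ← Matrix.kroneckerMap_transpose,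
      hAT, hIT, hC, Matrix.transpose_one]
    ext ⟨i, k⟩ ⟨j, l⟩
    simp [Matrix.kroneckerMap_apply]
    ring
  refine ⟨hST, ?_⟩
  -- real-side algebra
  have hII : I' * I' = 1 := by
    show Matrix.fromBlocks (1 : Matrix (Fin m₁) (Fin m₁) ℝ) 0 0 (-1)
        * Matrix.fromBlocks 1 0 0 (-1) = 1
    rw [Matrix.fromBlocks_multiply]
    simp [Matrix.fromBlocks_one]
  have hIA : I' * A + A * I' = 0 := by
    show Matrix.fromBlocks (1 : Matrix (Fin m₁) (Fin m₁) ℝ) 0 0 (-1)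
          * Matrix.fromBlocks 0 B (-Bᵀ) 0
        + Matrix.fromBlocks 0 B (-Bᵀ) 0
          * Matrix.fromBlocks (1 : Matrix (Fin m₁) (Fin m₁) ℝ) 0 0 (-1) = 0
    rw [Matrix.fromBlocks_multiply, Matrix.fromBlocks_multiply]
    ext (i | i) (j | j) <;> simp
  have hSS : S * S = (1 : Matrix (Fin m₁ ⊕ Fin m₂) (Fin m₁ ⊕ Fin m₂) ℝ) ⊗ₖ (C * C)
      + (A * A) ⊗ₖ (1 : Matrix (Fin n) (Fin n) ℝ) := by
    have expand : S * S = (I' * I') ⊗ₖ (C * C)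
        + ((I' * A + A * I') ⊗ₖ C + (A * A) ⊗ₖ (1 : Matrix (Fin n) (Fin n) ℝ)) := by
      show (I' ⊗ₖ C + A ⊗ₖ 1) * (I' ⊗ₖ C + A ⊗ₖ 1) = _
      simp only [add_mul, mul_add, ← Matrix.mul_kronecker_mul, Matrix.mul_one, Matrix.one_mul,
        Matrix.add_kronecker]
      abel
    rw [expand, hIA, hII, Matrix.zero_kronecker, zero_add]
  have hSST : S * Sᵀ = -((1 : Matrix (Fin m₁ ⊕ Fin m₂) (Fin m₁ ⊕ Fin m₂) ℝ) ⊗ₖ (C * C)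
      + (A * A) ⊗ₖ (1 : Matrix (Fin n) (Fin n) ℝ)) := by
    rw [hST, Matrix.mul_neg, hSS]
  -- complexify
  obtain ⟨U, h, hU1, hU2, hAdiag⟩ := skew_diag A hAT
  obtain ⟨V, g, hV1, hV2, hCdiag⟩ := skew_diag C hC
  have cancelU : ∀ X, star U * (U * X) = X := fun X => by
    rw [← Matrix.mul_assoc, hU2, Matrix.one_mul]
  have cancelV : ∀ X, star V * (V * X) = X := fun X => by
    rw [← Matrix.mul_assoc, hV2, Matrix.one_mul]
  have hA2 : -(A.map Complex.ofReal * A.map Complex.ofReal)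
      = U * Matrix.diagonal (fun k => ((h k : ℂ)) ^ 2) * star U := by
    rw [hAdiag]
    have hXX : (U * Matrix.diagonal (fun k => -Complex.I * (h k : ℂ)) * star U)
          * (U * Matrix.diagonal (fun k => -Complex.I * (h k : ℂ)) * star U)
        = U * (Matrix.diagonal (fun k => -Complex.I * (h k : ℂ))
            * Matrix.diagonal (fun k => -Complex.I * (h k : ℂ))) * star U := by
      simp only [Matrix.mul_assoc, cancelU]
    have heq : (fun i => -Complex.I * (h i : ℂ) * (-Complex.I * (h i : ℂ)))
        = fun i => -(((h i : ℂ)) ^ 2) := by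
      funext i; linear_combination ((h i : ℂ) ^ 2) * Complex.I_sq
    have hd : -(Matrix.diagonal fun i => -Complex.I * (h i : ℂ) * (-Complex.I * (h i : ℂ)))
        = Matrix.diagonal (fun k => ((h k : ℂ)) ^ 2) := by
      rw [heq]
      ext i j
      rcases eq_or_ne i j with rfl | hij <;> simp [Matrix.diagonal_apply, *]
    rw [hXX, Matrix.diagonal_mul_diagonal, ← Matrix.neg_mul, ← Matrix.mul_neg, hd]
  have hC2 : -(C.map Complex.ofReal * C.map Complex.ofReal)
      = V * Matrix.diagonal (fun k => ((g k : ℂ)) ^ 2) * star V := by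
    rw [hCdiag]
    have hXX : (V * Matrix.diagonal (fun k => -Complex.I * (g k : ℂ)) * star V)
          * (V * Matrix.diagonal (fun k => -Complex.I * (g k : ℂ)) * star V)
        = V * (Matrix.diagonal (fun k => -Complex.I * (g k : ℂ))
            * Matrix.diagonal (fun k => -Complex.I * (g k : ℂ))) * star V := by
      simp only [Matrix.mul_assoc, cancelV]
    have heq : (fun i => -Complex.I * (g i : ℂ) * (-Complex.I * (g i : ℂ)))
        = fun i => -(((g i : ℂ)) ^ 2) := by
      funext i; linear_combination ((g i : ℂ) ^ 2) * Complex.I_sq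
    have hd : -(Matrix.diagonal fun i => -Complex.I * (g i : ℂ) * (-Complex.I * (g i : ℂ)))
        = Matrix.diagonal (fun k => ((g k : ℂ)) ^ 2) := by
      rw [heq]
      ext i j
      rcases eq_or_ne i j with rfl | hij <;> simp [Matrix.diagonal_apply, *]
    rw [hXX, Matrix.diagonal_mul_diagonal, ← Matrix.neg_mul, ← Matrix.mul_neg, hd]
  -- the diagonalization of S*Sᵀ
  have hRHS : (U ⊗ₖ V)
        * Matrix.diagonal (fun p : (Fin m₁ ⊕ Fin m₂) × Fin n =>
            ((h p.1 : ℂ)) ^ 2 + ((g p.2 : ℂ)) ^ 2)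
        * (star U ⊗ₖ star V)
      = (-(A.map Complex.ofReal * A.map Complex.ofReal)) ⊗ₖ (1 : Matrix (Fin n) (Fin n) ℂ)
        + (1 : Matrix (Fin m₁ ⊕ Fin m₂) (Fin m₁ ⊕ Fin m₂) ℂ) ⊗ₖ (-(C.map Complex.ofReal * C.map Complex.ofReal)) := by
    have dk := diag_kron (fun k : Fin m₁ ⊕ Fin m₂ => ((h k : ℂ)) ^ 2)
      (fun k : Fin n => ((g k : ℂ)) ^ 2)
    rw [← dk, Matrix.mul_add, Matrix.add_mul, ← Matrix.mul_kronecker_mul,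
      ← Matrix.mul_kronecker_mul, ← Matrix.mul_kronecker_mul, ← Matrix.mul_kronecker_mul,
      Matrix.mul_one, Matrix.mul_one, hU1, hV1, ← hA2, ← hC2]
  have hmap : (S * Sᵀ).map Complex.ofReal
      = (U ⊗ₖ V)
        * Matrix.diagonal (fun p : (Fin m₁ ⊕ Fin m₂) × Fin n =>
            ((h p.1 : ℂ)) ^ 2 + ((g p.2 : ℂ)) ^ 2)
        * (star U ⊗ₖ star V) := by
    have hnegsplit : -((1 : Matrix (Fin m₁ ⊕ Fin m₂) (Fin m₁ ⊕ Fin m₂) ℂ)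
            ⊗ₖ (C.map Complex.ofReal * C.map Complex.ofReal)
          + (A.map Complex.ofReal * A.map Complex.ofReal) ⊗ₖ (1 : Matrix (Fin n) (Fin n) ℂ))
        = (-(A.map Complex.ofReal * A.map Complex.ofReal)) ⊗ₖ (1 : Matrix (Fin n) (Fin n) ℂ)
          + (1 : Matrix (Fin m₁ ⊕ Fin m₂) (Fin m₁ ⊕ Fin m₂) ℂ)
            ⊗ₖ (-(C.map Complex.ofReal * C.map Complex.ofReal)) := by
      ext ⟨i, k⟩ ⟨j, l⟩
      simp [Matrix.kroneckerMap_apply]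
    rw [hSST, map_ofReal_neg, map_ofReal_add, map_kron, map_kron, map_ofReal_one, map_ofReal_one,
      map_ofReal_mul, map_ofReal_mul, hnegsplit, ← hRHS]
  have hUV1 : (U ⊗ₖ V) * (star U ⊗ₖ star V) = 1 := by
    rw [← Matrix.mul_kronecker_mul, hU1, hV1, Matrix.one_kronecker_one]
  have lhs_spec : cSpec (S * Sᵀ)
      = Finset.univ.val.map (fun p : (Fin m₁ ⊕ Fin m₂) × Fin n =>
          ((h p.1 : ℂ)) ^ 2 + ((g p.2 : ℂ)) ^ 2) := by
    show ((S * Sᵀ).map Complex.ofReal).charpoly.roots = _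
    rw [hmap, charpoly_conj' _ _ _ hUV1, roots_charpoly_diagonal]
  have hAspec : cSpec A = Finset.univ.val.map (fun k => -Complex.I * (h k : ℂ)) := by
    show (A.map Complex.ofReal).charpoly.roots = _
    rw [hAdiag, charpoly_conj' _ _ _ hU1, roots_charpoly_diagonal]
  have hCspec : cSpec C = Finset.univ.val.map (fun k => -Complex.I * (g k : ℂ)) := by
    show (C.map Complex.ofReal).charpoly.roots = _
    rw [hCdiag, charpoly_conj' _ _ _ hV1, roots_charpoly_diagonal]
  rw [lhs_spec, hAspec, hCspec]
  have huniv : (Finset.univ : Finset ((Fin m₁ ⊕ Fin m₂) × Fin n)).val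
      = (Finset.univ.val : Multiset (Fin m₁ ⊕ Fin m₂)).bind
          (fun i => (Finset.univ.val : Multiset (Fin n)).map (Prod.mk i)) := by
    rw [← Finset.univ_product_univ, Finset.product_val]
    rfl
  rw [huniv, Multiset.map_bind, Multiset.bind_map]
  refine Multiset.bind_congr (fun i _ => ?_)
  rw [Multiset.map_map, Multiset.map_map]
  refine Multiset.map_congr rfl fun j _ => ?_
  show ((h i : ℂ)) ^ 2 + ((g j : ℂ)) ^ 2
      = -(-Complex.I * (h i : ℂ)) ^ 2 - (-Complex.I * (g j : ℂ)) ^ 2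
  linear_combination ((h i : ℂ) ^ 2 + (g j : ℂ) ^ 2) * Complex.I_sq
end

section
/- Let H^τ be an oriented bipartite graph of order m whose nonzero skew eigenvalues are ±iμ_1,…,±iμ_t (and m−2t zeros), and G^σ an oriented graph of order n whose nonzero skew eigenvalues are ±iλ_1,…,±iλ_r (and n−2r zeros). Then the modified Cartesian product orientation (H^τ □ G^σ)^o has skew eigenvalues ±i√(μ_j² + λ_k²) each with multiplicity 2 (for 1≤j≤t, 1≤k≤r), ±iμ_j with multiplicity n−2r, ±iλ_k with multiplicity m−2t, and 0 with multiplicity (m−2t)(n−2r). -/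
open Matrix Kronecker Polynomial

section aux
variable {N : Type*} [Fintype N] [DecidableEq N] {R : Type*} [CommRing R]

lemma aux_charpoly_sq_comp (M : Matrix N N R) :
    (Matrix.charpoly (M * M)).comp (X ^ 2) = M.charpoly * (-M).charpoly := by
  have hcomm : Commute (Matrix.scalar N (X : R[X])) ((C : R →+* R[X]).mapMatrix M) :=
    Matrix.scalar_commute _ (fun r => Commute.all _ r) _
  have h2 : (charmatrix (M*M)).map (Polynomial.compRingHom (X ^ 2 : R[X]))
      = Matrix.scalar N ((X:R[X])^2) - (C : R →+* R[X]).mapMatrix (M*M) := by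
    ext i j
    by_cases h : i = j <;>
      simp [h, charmatrix_apply, Matrix.scalar_apply, Matrix.diagonal_apply, Matrix.map_apply,
        Matrix.mul_apply, map_sum, _root_.map_mul]
  have h3 : Matrix.scalar N ((X:R[X])^2) - (C : R →+* R[X]).mapMatrix (M*M)
      = charmatrix M * (Matrix.scalar N (X:R[X]) + (C : R →+* R[X]).mapMatrix M) := by
    have e1 : (C : R →+* R[X]).mapMatrix (M*M)
        = (C : R →+* R[X]).mapMatrix M * (C : R →+* R[X]).mapMatrix M := _root_.map_mul _ _ _
    have e2 : Matrix.scalar N ((X:R[X])^2)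
        = Matrix.scalar N (X:R[X]) * Matrix.scalar N (X:R[X]) := by
      rw [← _root_.map_mul, sq]
    rw [charmatrix, sub_mul, mul_add, mul_add, hcomm.eq, e1, e2]
    abel
  have h4 : charmatrix (-M) = Matrix.scalar N (X:R[X]) + (C : R →+* R[X]).mapMatrix M := by
    rw [charmatrix, map_neg, sub_neg_eq_add]
  have h1 : (Matrix.charpoly (M*M)).comp (X^2)
      = ((charmatrix (M*M)).map (Polynomial.compRingHom (X ^ 2 : R[X]))).det := by
    rw [Matrix.charpoly, ← coe_compRingHom_apply, RingHom.map_det, RingHom.mapMatrix_apply]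
  rw [h1, h2, h3, det_mul, ← h4, Matrix.charpoly, Matrix.charpoly]

lemma aux_charpoly_neg_of_skew (M : Matrix N N R) (h : Mᵀ = -M) :
    (-M).charpoly = M.charpoly := by
  have : charmatrix (-M) = (charmatrix M)ᵀ := by
    rw [charmatrix, charmatrix, transpose_sub]
    congr 1
    · ext i j; by_cases hij : i = j <;> simp [Matrix.scalar_apply, Matrix.diagonal_apply, hij,
        transpose_apply, eq_comm]
    · ext i j; simp [← h, Matrix.map_apply]
  rw [Matrix.charpoly, this, det_transpose, Matrix.charpoly]

lemma aux_charpoly_conj (U W M : Matrix N N R) (hUW : U * W = 1) :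
    (U * M * W).charpoly = M.charpoly := by
  have key : charmatrix (U * M * W)
      = (C : R →+* R[X]).mapMatrix U * charmatrix M * (C : R →+* R[X]).mapMatrix W := by
    rw [charmatrix, charmatrix, mul_sub, sub_mul, _root_.map_mul, _root_.map_mul]
    congr 1
    rw [← (Matrix.scalar_commute (X:R[X]) (fun r => Commute.all _ r) _).eq, mul_assoc,
      ← _root_.map_mul, hUW, _root_.map_one, mul_one]
  have h5 : ((C : R →+* R[X]).mapMatrix U).det * ((C : R →+* R[X]).mapMatrix W).det = 1 := by
    rw [← det_mul, ← _root_.map_mul, hUW, _root_.map_one, det_one]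
  rw [Matrix.charpoly, key, det_mul, det_mul, mul_right_comm, h5, one_mul, Matrix.charpoly]

lemma aux_charpoly_diagonal (d : N → R) :
    (Matrix.diagonal d).charpoly = ((Finset.univ.val.map d).map (fun z => X - C z)).prod := by
  have : charmatrix (Matrix.diagonal d) = Matrix.diagonal (fun i => (X : R[X]) - C (d i)) := by
    ext i j; by_cases h : i = j <;>
      simp [h, charmatrix_apply, Matrix.diagonal_apply]
  rw [Matrix.charpoly, this, det_diagonal, Multiset.map_map, Finset.prod_eq_multiset_prod]
  rfl

lemma aux_comp_sq_inj (p q : Polynomial ℂ) (h : p.comp (X^2) = q.comp (X^2)) : p = q := by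
  apply Polynomial.funext
  intro z
  obtain ⟨w, hw⟩ := IsAlgClosed.exists_pow_nat_eq z (n := 2) (by norm_num)
  have := congrArg (Polynomial.eval w) h
  simpa [Polynomial.eval_comp, hw] using this

lemma aux_kronecker_neg {P : Type*} [Fintype P] [DecidableEq P] (A : Matrix N N R)
    (B : Matrix P P R) : A ⊗ₖ (-B) = -(A ⊗ₖ B) := by
  ext i j; simp [Matrix.kroneckerMap_apply, mul_neg]

end aux

lemma aux_pair (a : ℂ) : (X - C a) * (X + C a) = X^2 - C a ^ 2 := by ring

lemma aux_Isq (c : ℝ) : (Complex.I * (c : ℂ))^2 = -((c : ℂ)^2) := by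
  rw [mul_pow, Complex.I_sq]; ring

lemma aux_spec_sq {s : ℕ} (z : ℕ) (c : Fin s → ℝ) :
    (((((Finset.univ.val.bind fun k => Multiset.replicate 2 (-((c k : ℂ))^2))
        + Multiset.replicate z (0:ℂ))).map fun w => X - C w).prod).comp (X^2)
      = ((((Finset.univ.val.map fun k => Complex.I * (c k : ℂ))
          + (Finset.univ.val.map fun k => -(Complex.I * (c k : ℂ)))
          + Multiset.replicate z (0:ℂ)).map fun w => X - C w)).prod
        * ((((Finset.univ.val.map fun k => Complex.I * (c k : ℂ))
          + (Finset.univ.val.map fun k => -(Complex.I * (c k : ℂ)))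
          + Multiset.replicate z (0:ℂ)).map fun w => X - C w)).prod := by
  have hL : ((((Finset.univ.val.bind fun k => Multiset.replicate 2 (-((c k : ℂ))^2))
        + Multiset.replicate z (0:ℂ))).map fun w => X - C w).prod
      = (∏ k : Fin s, (X - C (-((c k : ℂ))^2))^2) * X^z := by
    simp only [Multiset.map_add, Multiset.prod_add, Multiset.map_bind, Multiset.prod_bind,
      Multiset.map_replicate, Multiset.prod_replicate, map_zero, sub_zero,
      ← Finset.prod_eq_multiset_prod]
  have hR : (((Finset.univ.val.map fun k => Complex.I * (c k : ℂ))
          + (Finset.univ.val.map fun k => -(Complex.I * (c k : ℂ)))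
          + Multiset.replicate z (0:ℂ)).map fun w => X - C w).prod
      = (∏ k : Fin s, (X^2 + C ((c k : ℂ)^2))) * X^z := by
    simp only [Multiset.map_add, Multiset.prod_add, Multiset.map_map, Multiset.map_replicate,
      Multiset.prod_replicate, map_zero, sub_zero, Function.comp_def,
      ← Finset.prod_eq_multiset_prod]
    rw [← Finset.prod_mul_distrib]
    congr 1
    refine Finset.prod_congr rfl fun k _ => ?_
    rw [map_neg, sub_neg_eq_add, aux_pair, ← map_pow, aux_Isq, map_neg, sub_neg_eq_add]
  rw [hL, hR]
  simp only [mul_comp, prod_comp, pow_comp, sub_comp, add_comp, X_comp, C_comp, map_neg,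
    sub_neg_eq_add, ← map_pow, Finset.prod_pow]
  ring

lemma aux_sqrt_sq (a b : ℝ) :
    ((Real.sqrt (a^2 + b^2) : ℝ) : ℂ)^2 = ((a:ℂ)^2 + (b:ℂ)^2) := by
  rw [← Complex.ofReal_pow, Real.sq_sqrt (by positivity)]
  push_cast
  ring

lemma aux_final {t r : ℕ} (zH zG : ℕ) (μ : Fin t → ℝ) (lam : Fin r → ℝ) :
    ((((((Finset.univ.val.bind fun j => Multiset.replicate 2 (-((μ j : ℂ))^2))
        + Multiset.replicate zH (0:ℂ))).bind fun w =>
        (((Finset.univ.val.bind fun k => Multiset.replicate 2 (-((lam k : ℂ))^2))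
        + Multiset.replicate zG (0:ℂ))).map (fun z => w + z)).map fun w => X - C w).prod).comp (X^2)
      = (((((Finset.univ : Finset (Fin t × Fin r)).val.bind fun p =>
        Multiset.replicate 2 (Complex.I * (Real.sqrt ((μ p.1) ^ 2 + (lam p.2) ^ 2) : ℂ)) +
        Multiset.replicate 2 (-(Complex.I * (Real.sqrt ((μ p.1) ^ 2 + (lam p.2) ^ 2) : ℂ)))) +
      ((Finset.univ : Finset (Fin t)).val.bind fun j =>
        Multiset.replicate zG (Complex.I * (μ j : ℂ)) +
        Multiset.replicate zG (-(Complex.I * (μ j : ℂ)))) +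
      ((Finset.univ : Finset (Fin r)).val.bind fun k =>
        Multiset.replicate zH (Complex.I * (lam k : ℂ)) +
        Multiset.replicate zH (-(Complex.I * (lam k : ℂ)))) +
      Multiset.replicate (zH * zG) (0:ℂ)).map fun w => X - C w).prod)
      * (((((Finset.univ : Finset (Fin t × Fin r)).val.bind fun p =>
        Multiset.replicate 2 (Complex.I * (Real.sqrt ((μ p.1) ^ 2 + (lam p.2) ^ 2) : ℂ)) +
        Multiset.replicate 2 (-(Complex.I * (Real.sqrt ((μ p.1) ^ 2 + (lam p.2) ^ 2) : ℂ)))) +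
      ((Finset.univ : Finset (Fin t)).val.bind fun j =>
        Multiset.replicate zG (Complex.I * (μ j : ℂ)) +
        Multiset.replicate zG (-(Complex.I * (μ j : ℂ)))) +
      ((Finset.univ : Finset (Fin r)).val.bind fun k =>
        Multiset.replicate zH (Complex.I * (lam k : ℂ)) +
        Multiset.replicate zH (-(Complex.I * (lam k : ℂ)))) +
      Multiset.replicate (zH * zG) (0:ℂ)).map fun w => X - C w).prod) := by
  have n1 : ∀ (x y : ℝ), (X - C (Complex.I * ((Real.sqrt (x^2+y^2) : ℝ) : ℂ)))^2
      * (X + C (Complex.I * ((Real.sqrt (x^2+y^2) : ℝ) : ℂ)))^2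
      = (X^2 + C ((x:ℂ)^2 + (y:ℂ)^2))^2 := by
    intro x y
    rw [← mul_pow, aux_pair, ← map_pow, aux_Isq, aux_sqrt_sq, map_neg, sub_neg_eq_add]
  have n2 : ∀ (x : ℝ) (m : ℕ), (X - C (Complex.I * (x:ℂ)))^m
      * (X + C (Complex.I * (x:ℂ)))^m = (X^2 + C ((x:ℂ)^2))^m := by
    intro x m
    rw [← mul_pow, aux_pair, ← map_pow, aux_Isq, map_neg, sub_neg_eq_add]
  have n3 : ∀ a b : ℂ, (X:ℂ[X])^2 - C (-a^2 + -b^2) = X^2 + C (a^2 + b^2) := by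
    intro a b
    rw [show ∀ a b : ℂ, -a^2 + -b^2 = -(a^2+b^2) from fun a b => by ring, map_neg,
      sub_neg_eq_add]
  have n4 : ∀ a : ℂ, (X:ℂ[X])^2 - C (-a^2) = X^2 + C (a^2) := by
    intro a
    rw [map_neg, sub_neg_eq_add]
  simp only [Multiset.map_bind, Multiset.prod_bind, Multiset.map_add, Multiset.prod_add,
    Multiset.map_replicate, Multiset.prod_replicate, Multiset.map_map, Function.comp_def,
    ← Finset.prod_eq_multiset_prod]
  simp only [mul_comp, prod_comp, pow_comp, sub_comp, X_comp, C_comp]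
  simp only [add_zero, zero_add, map_zero, sub_zero]
  simp only [map_neg, sub_neg_eq_add] -- only affects linear factors X - C(-(I c))
  simp only [n3, n4]
  simp only [n1, n2, Fintype.prod_prod_type]
  simp only [mul_pow, Finset.prod_mul_distrib, Finset.prod_pow]
  ring

lemma aux_monic_sq_cancel (p q : Polynomial ℂ) (hp : p.Monic) (hq : q.Monic)
    (h : p * p = q * q) : p = q := by
  rcases mul_self_eq_mul_self_iff.mp h with h1 | h2
  · exact h1
  · exfalso
    have h3 := hp
    rw [h2, Polynomial.Monic, Polynomial.leadingCoeff_neg, hq.leadingCoeff] at h3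
    norm_num at h3

/-- Skew spectrum of the modified Cartesian product: if the oriented bipartite graph
`H^τ` (with skew-adjacency matrix `Sh = [[0,B],[-Bᵀ,0]]`, order `m = m₁ + m₂`) has
nonzero skew eigenvalues `±iμ₁, …, ±iμ_t` together with `m - 2t` zeros, and `G^σ`
(skew-adjacency matrix `Sg`, order `n`) has nonzero skew eigenvalues
`±iλ₁, …, ±iλ_r` together with `n - 2r` zeros, then the oriented product
`(H^τ □ G^σ)^o`, with skew-adjacency matrix `S = I' ⊗ Sg + Sh ⊗ I`, has skew
eigenvalues `±i√(μ_j² + λ_k²)` each with multiplicity `2`, `±iμ_j` with multiplicity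
`n - 2r`, `±iλ_k` with multiplicity `m - 2t`, and `0` with multiplicity
`(m - 2t)(n - 2r)`. -/
theorem product_orientation_spectrum
    (m₁ m₂ n t r : ℕ)
    (B : Matrix (Fin m₁) (Fin m₂) ℝ)
    (Sg : Matrix (Fin n) (Fin n) ℝ) (hSg : Sgᵀ = -Sg)
    (μ : Fin t → ℝ) (lam : Fin r → ℝ)
    (hμ : ∀ j, μ j ≠ 0) (hlam : ∀ k, lam k ≠ 0)
    (hSh : cSpec (Matrix.fromBlocks 0 B (-Bᵀ) 0 :
        Matrix (Fin m₁ ⊕ Fin m₂) (Fin m₁ ⊕ Fin m₂) ℝ) =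
      (Finset.univ.val.map fun j => Complex.I * (μ j : ℂ)) +
      (Finset.univ.val.map fun j => -(Complex.I * (μ j : ℂ))) +
      Multiset.replicate (m₁ + m₂ - 2 * t) 0)
    (hSgspec : cSpec Sg =
      (Finset.univ.val.map fun k => Complex.I * (lam k : ℂ)) +
      (Finset.univ.val.map fun k => -(Complex.I * (lam k : ℂ))) +
      Multiset.replicate (n - 2 * r) 0) :
    let Sh : Matrix (Fin m₁ ⊕ Fin m₂) (Fin m₁ ⊕ Fin m₂) ℝ :=
      Matrix.fromBlocks 0 B (-Bᵀ) 0
    let I' : Matrix (Fin m₁ ⊕ Fin m₂) (Fin m₁ ⊕ Fin m₂) ℝ :=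
      Matrix.fromBlocks 1 0 0 (-1)
    let S := I' ⊗ₖ Sg + Sh ⊗ₖ (1 : Matrix (Fin n) (Fin n) ℝ)
    cSpec S =
      ((Finset.univ : Finset (Fin t × Fin r)).val.bind fun p =>
        Multiset.replicate 2
          (Complex.I * (Real.sqrt ((μ p.1) ^ 2 + (lam p.2) ^ 2) : ℂ)) +
        Multiset.replicate 2
          (-(Complex.I * (Real.sqrt ((μ p.1) ^ 2 + (lam p.2) ^ 2) : ℂ)))) +
      ((Finset.univ : Finset (Fin t)).val.bind fun j =>
        Multiset.replicate (n - 2 * r) (Complex.I * (μ j : ℂ)) +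
        Multiset.replicate (n - 2 * r) (-(Complex.I * (μ j : ℂ)))) +
      ((Finset.univ : Finset (Fin r)).val.bind fun k =>
        Multiset.replicate (m₁ + m₂ - 2 * t) (Complex.I * (lam k : ℂ)) +
        Multiset.replicate (m₁ + m₂ - 2 * t) (-(Complex.I * (lam k : ℂ)))) +
      Multiset.replicate ((m₁ + m₂ - 2 * t) * (n - 2 * r)) 0 := by
  intro Sh I' S
  classical
  set Bc : Matrix (Fin m₁) (Fin m₂) ℂ := B.map Complex.ofReal with hBc
  set Gc : Matrix (Fin n) (Fin n) ℂ := Sg.map Complex.ofReal with hGc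
  set Hc : Matrix (Fin m₁ ⊕ Fin m₂) (Fin m₁ ⊕ Fin m₂) ℂ :=
    Matrix.fromBlocks 0 Bc (-Bcᵀ) 0 with hHc
  set Ic : Matrix (Fin m₁ ⊕ Fin m₂) (Fin m₁ ⊕ Fin m₂) ℂ :=
    Matrix.fromBlocks 1 0 0 (-1) with hIc
  set Sc : Matrix ((Fin m₁ ⊕ Fin m₂) × Fin n) ((Fin m₁ ⊕ Fin m₂) × Fin n) ℂ :=
    Ic ⊗ₖ Gc + Hc ⊗ₖ 1 with hSc
  -- map identifications
  have hHcm : Sh.map Complex.ofReal = Hc := by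
    ext (i|i) (j|j) <;>
      simp [hHc, hBc, Sh, Matrix.map_apply, fromBlocks_apply₁₁, fromBlocks_apply₁₂,
        fromBlocks_apply₂₁, fromBlocks_apply₂₂]
  have hIcm : I'.map Complex.ofReal = Ic := by
    ext (i|i) (j|j) <;>
      simp [hIc, I', Matrix.map_apply, fromBlocks_apply₁₁, fromBlocks_apply₁₂,
        fromBlocks_apply₂₁, fromBlocks_apply₂₂, Matrix.one_apply, apply_ite]
  have hmap : S.map Complex.ofReal = Sc := by
    ext ⟨a, v⟩ ⟨b, w⟩
    have h1 : Ic a b = Complex.ofReal (I' a b) := by rw [← hIcm]; rfl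
    have h2 : Hc a b = Complex.ofReal (Sh a b) := by rw [← hHcm]; rfl
    simp only [hSc, S, Matrix.map_apply, Matrix.add_apply, Matrix.kroneckerMap_apply,
      h1, h2, hGc, Matrix.one_apply]
    push_cast [apply_ite]
    split_ifs <;> ring
  -- basic facts
  have hGskew : Gcᵀ = -Gc := by
    ext v w
    have := congrFun (congrFun hSg v) w
    simp only [transpose_apply, neg_apply] at this ⊢
    simp [hGc, Matrix.map_apply, this]
  have hHskew : Hcᵀ = -Hc := by
    rw [hHc, fromBlocks_transpose, fromBlocks_neg]
    simp [transpose_neg]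
  have hIsym : Icᵀ = Ic := by
    rw [hIc, fromBlocks_transpose]
    simp
  have hskew : Scᵀ = -Sc := by
    rw [hSc, transpose_add, ← kroneckerMap_transpose, ← kroneckerMap_transpose,
      hIsym, hGskew, hHskew, transpose_one]
    rw [aux_kronecker_neg]
    have : (-Hc) ⊗ₖ (1 : Matrix (Fin n) (Fin n) ℂ) = -(Hc ⊗ₖ 1) := by
      ext i j; simp [Matrix.kroneckerMap_apply]
    rw [this, neg_add]
  have hI2 : Ic * Ic = 1 := by
    rw [hIc, fromBlocks_multiply]
    simp [fromBlocks_one]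
  have hanti : Ic * Hc + Hc * Ic = 0 := by
    rw [hIc, hHc, fromBlocks_multiply, fromBlocks_multiply, fromBlocks_add]
    ext (i | i) (j | j) <;> simp
  have hsq : Sc * Sc = (1 : Matrix (Fin m₁ ⊕ Fin m₂) (Fin m₁ ⊕ Fin m₂) ℂ) ⊗ₖ (Gc * Gc)
      + (Hc * Hc) ⊗ₖ (1 : Matrix (Fin n) (Fin n) ℂ) := by
    rw [hSc]
    simp only [add_mul, mul_add, ← mul_kronecker_mul, mul_one, one_mul]
    rw [hI2]
    have h0 : (Ic * Hc) ⊗ₖ Gc + (Hc * Ic) ⊗ₖ Gc = 0 := by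
      rw [← add_kronecker, hanti, zero_kronecker]
    calc (1:Matrix _ _ ℂ) ⊗ₖ (Gc*Gc) + (Hc * Ic) ⊗ₖ Gc + ((Ic * Hc) ⊗ₖ Gc + (Hc*Hc) ⊗ₖ 1)
        = (1:Matrix _ _ ℂ) ⊗ₖ (Gc*Gc) + (Hc*Hc) ⊗ₖ 1 + ((Ic * Hc) ⊗ₖ Gc + (Hc * Ic) ⊗ₖ Gc) := by
          abel
      _ = _ := by rw [h0, add_zero]
  -- Hermitian squares
  have hGH : (Gc * Gc).IsHermitian := by
    have h1 : Gcᴴ = -Gc := by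
      have : Gcᴴ = Gcᵀ := by
        ext v w
        simp [conjTranspose_apply, transpose_apply, hGc, Matrix.map_apply]
      rw [this, hGskew]
    rw [Matrix.IsHermitian, conjTranspose_mul, h1, neg_mul_neg]
  have hHH : (Hc * Hc).IsHermitian := by
    have h1 : Hcᴴ = -Hc := by
      have : Hcᴴ = Hcᵀ := by
        ext (i|i) (j|j) <;>
        simp [conjTranspose_apply, transpose_apply, hHc, hBc, Matrix.map_apply,
          fromBlocks_apply₁₁, fromBlocks_apply₁₂, fromBlocks_apply₂₁, fromBlocks_apply₂₂]
      rw [this, hHskew]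
    rw [Matrix.IsHermitian, conjTranspose_mul, h1, neg_mul_neg]
  -- spectral decompositions
  set U : Matrix (Fin n) (Fin n) ℂ := (hGH.eigenvectorUnitary : Matrix (Fin n) (Fin n) ℂ) with hU
  set dg : Fin n → ℂ := fun v => ((hGH.eigenvalues v : ℝ) : ℂ) with hdg
  have hGdiag : Gc * Gc = U * Matrix.diagonal dg * star U := hGH.spectral_theorem
  have hUU : U * star U = 1 := (hGH.eigenvectorUnitary).prop.2
  set V : Matrix (Fin m₁ ⊕ Fin m₂) (Fin m₁ ⊕ Fin m₂) ℂ :=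
    (hHH.eigenvectorUnitary : Matrix (Fin m₁ ⊕ Fin m₂) (Fin m₁ ⊕ Fin m₂) ℂ) with hV
  set dh : Fin m₁ ⊕ Fin m₂ → ℂ := fun a => ((hHH.eigenvalues a : ℝ) : ℂ) with hdh
  have hHdiag : Hc * Hc = V * Matrix.diagonal dh * star V := hHH.spectral_theorem
  have hVV : V * star V = 1 := (hHH.eigenvectorUnitary).prop.2
  set D : (Fin m₁ ⊕ Fin m₂) × Fin n → ℂ := fun p => dh p.1 + dg p.2 with hD
  have hconj : Sc * Sc = (V ⊗ₖ U) * Matrix.diagonal D * ((star V) ⊗ₖ (star U)) := by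
    have hdiagD : Matrix.diagonal D
        = (1 : Matrix (Fin m₁ ⊕ Fin m₂) (Fin m₁ ⊕ Fin m₂) ℂ) ⊗ₖ Matrix.diagonal dg
          + Matrix.diagonal dh ⊗ₖ (1 : Matrix (Fin n) (Fin n) ℂ) := by
      ext ⟨a, v⟩ ⟨b, w⟩
      rcases eq_or_ne a b with rfl | hab
      · rcases eq_or_ne v w with rfl | hvw
        · simp [hD, Matrix.diagonal_apply, Matrix.one_apply, Matrix.kroneckerMap_apply, add_comm]
        · simp [hD, Matrix.diagonal_apply, Matrix.one_apply, Matrix.kroneckerMap_apply, hvw,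
            Prod.ext_iff]
      · simp [hD, Matrix.diagonal_apply, Matrix.one_apply, Matrix.kroneckerMap_apply, hab,
          Prod.ext_iff]
    rw [hsq, hdiagD, mul_add, add_mul, ← mul_kronecker_mul, ← mul_kronecker_mul,
      ← mul_kronecker_mul, ← mul_kronecker_mul, mul_one, mul_one, hUU, hVV,
      ← hGdiag, ← hHdiag]
  have hqS : (Sc * Sc).charpoly
      = ((Finset.univ.val.map D).map (fun z => X - C z)).prod := by
    rw [hconj, aux_charpoly_conj _ _ _ (by rw [← mul_kronecker_mul, hUU, hVV, one_kronecker_one]),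
      aux_charpoly_diagonal]
  have hqG : (Gc * Gc).charpoly
      = ((Finset.univ.val.map dg).map (fun z => X - C z)).prod := by
    rw [hGdiag, aux_charpoly_conj _ _ _ hUU, aux_charpoly_diagonal]
  have hqH : (Hc * Hc).charpoly
      = ((Finset.univ.val.map dh).map (fun z => X - C z)).prod := by
    rw [hHdiag, aux_charpoly_conj _ _ _ hVV, aux_charpoly_diagonal]
  have hsqS : (((Finset.univ.val.map D).map (fun z => X - C z)).prod).comp (X^2)
      = Sc.charpoly * Sc.charpoly := by
    rw [← hqS, aux_charpoly_sq_comp, aux_charpoly_neg_of_skew _ hskew]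
  have hsqG : (((Finset.univ.val.map dg).map (fun z => X - C z)).prod).comp (X^2)
      = Gc.charpoly * Gc.charpoly := by
    rw [← hqG, aux_charpoly_sq_comp, aux_charpoly_neg_of_skew _ hGskew]
  have hsqH : (((Finset.univ.val.map dh).map (fun z => X - C z)).prod).comp (X^2)
      = Hc.charpoly * Hc.charpoly := by
    rw [← hqH, aux_charpoly_sq_comp, aux_charpoly_neg_of_skew _ hHskew]
  -- split charpolys into roots
  have hGsplit : Gc.charpoly = ((cSpec Sg).map fun z => X - C z).prod := by
    have := (IsAlgClosed.splits _).eq_prod_roots_of_monic (Matrix.charpoly_monic Gc)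
    exact this
  have hHsplit : Hc.charpoly = ((cSpec Sh).map fun z => X - C z).prod := by
    have := (IsAlgClosed.splits _).eq_prod_roots_of_monic (Matrix.charpoly_monic Hc)
    rw [this]
    congr 1
    show _ = (((Sh.map Complex.ofReal).charpoly).roots).map _
    rw [hHcm]
  -- identify the eigenvalue multisets of the squares
  have hDG : Finset.univ.val.map dg
      = (Finset.univ.val.bind fun k => Multiset.replicate 2 (-((lam k : ℂ))^2))
        + Multiset.replicate (n - 2*r) (0:ℂ) := by
    have heq := aux_comp_sq_inj _ _ (hsqG.trans (by
      rw [hGsplit, hSgspec]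
      exact (aux_spec_sq (n - 2*r) lam).symm))
    have h2 := congrArg Polynomial.roots heq
    rwa [Polynomial.roots_multiset_prod_X_sub_C, Polynomial.roots_multiset_prod_X_sub_C] at h2
  have hDH : Finset.univ.val.map dh
      = (Finset.univ.val.bind fun j => Multiset.replicate 2 (-((μ j : ℂ))^2))
        + Multiset.replicate (m₁ + m₂ - 2*t) (0:ℂ) := by
    have heq := aux_comp_sq_inj _ _ (hsqH.trans (by
      rw [hHsplit, hSh]
      exact (aux_spec_sq (m₁ + m₂ - 2*t) μ).symm))
    have h2 := congrArg Polynomial.roots heq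
    rwa [Polynomial.roots_multiset_prod_X_sub_C, Polynomial.roots_multiset_prod_X_sub_C] at h2
  -- rewrite the product multiset as a bind over the two spectra
  have hDbind : Finset.univ.val.map D
      = (Finset.univ.val.map dh).bind
          (fun w => (Finset.univ.val.map dg).map (fun z => w + z)) := by
    rw [Multiset.bind_map]
    have h1 : (Finset.univ : Finset ((Fin m₁ ⊕ Fin m₂) × Fin n)).val
        = Finset.univ.val.bind fun a => Finset.univ.val.map (Prod.mk a) := by
      rw [← Finset.univ_product_univ, Finset.product_val]
      rfl
    rw [h1, Multiset.map_bind]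
    congr 1
    funext a
    rw [Multiset.map_map, Multiset.map_map]
    rfl
  -- final identity
  have hfinal : Sc.charpoly * Sc.charpoly
      = ((((Finset.univ : Finset (Fin t × Fin r)).val.bind fun p =>
          Multiset.replicate 2
            (Complex.I * (Real.sqrt ((μ p.1) ^ 2 + (lam p.2) ^ 2) : ℂ)) +
          Multiset.replicate 2
            (-(Complex.I * (Real.sqrt ((μ p.1) ^ 2 + (lam p.2) ^ 2) : ℂ)))) +
        ((Finset.univ : Finset (Fin t)).val.bind fun j =>
          Multiset.replicate (n - 2 * r) (Complex.I * (μ j : ℂ)) +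
          Multiset.replicate (n - 2 * r) (-(Complex.I * (μ j : ℂ)))) +
        ((Finset.univ : Finset (Fin r)).val.bind fun k =>
          Multiset.replicate (m₁ + m₂ - 2 * t) (Complex.I * (lam k : ℂ)) +
          Multiset.replicate (m₁ + m₂ - 2 * t) (-(Complex.I * (lam k : ℂ)))) +
        Multiset.replicate ((m₁ + m₂ - 2 * t) * (n - 2 * r)) (0:ℂ)).map
          fun w => X - C w).prod
      * ((((Finset.univ : Finset (Fin t × Fin r)).val.bind fun p =>
          Multiset.replicate 2
            (Complex.I * (Real.sqrt ((μ p.1) ^ 2 + (lam p.2) ^ 2) : ℂ)) +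
          Multiset.replicate 2
            (-(Complex.I * (Real.sqrt ((μ p.1) ^ 2 + (lam p.2) ^ 2) : ℂ)))) +
        ((Finset.univ : Finset (Fin t)).val.bind fun j =>
          Multiset.replicate (n - 2 * r) (Complex.I * (μ j : ℂ)) +
          Multiset.replicate (n - 2 * r) (-(Complex.I * (μ j : ℂ)))) +
        ((Finset.univ : Finset (Fin r)).val.bind fun k =>
          Multiset.replicate (m₁ + m₂ - 2 * t) (Complex.I * (lam k : ℂ)) +
          Multiset.replicate (m₁ + m₂ - 2 * t) (-(Complex.I * (lam k : ℂ)))) +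
        Multiset.replicate ((m₁ + m₂ - 2 * t) * (n - 2 * r)) (0:ℂ)).map
          fun w => X - C w).prod := by
    rw [← hsqS, hDbind, hDG, hDH]
    exact aux_final (m₁ + m₂ - 2*t) (n - 2*r) μ lam
  have hPMmonic : ((((Finset.univ : Finset (Fin t × Fin r)).val.bind fun p =>
          Multiset.replicate 2
            (Complex.I * (Real.sqrt ((μ p.1) ^ 2 + (lam p.2) ^ 2) : ℂ)) +
          Multiset.replicate 2
            (-(Complex.I * (Real.sqrt ((μ p.1) ^ 2 + (lam p.2) ^ 2) : ℂ)))) +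
        ((Finset.univ : Finset (Fin t)).val.bind fun j =>
          Multiset.replicate (n - 2 * r) (Complex.I * (μ j : ℂ)) +
          Multiset.replicate (n - 2 * r) (-(Complex.I * (μ j : ℂ)))) +
        ((Finset.univ : Finset (Fin r)).val.bind fun k =>
          Multiset.replicate (m₁ + m₂ - 2 * t) (Complex.I * (lam k : ℂ)) +
          Multiset.replicate (m₁ + m₂ - 2 * t) (-(Complex.I * (lam k : ℂ)))) +
        Multiset.replicate ((m₁ + m₂ - 2 * t) * (n - 2 * r)) (0:ℂ)).map
          fun w => X - C w).prod.Monic := by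
    apply Polynomial.monic_multiset_prod_of_monic
    intro z _
    exact Polynomial.monic_X_sub_C z
  have hpS := aux_monic_sq_cancel _ _ (Matrix.charpoly_monic Sc) hPMmonic hfinal
  show ((S.map Complex.ofReal).charpoly).roots = _
  rw [hmap, hpS, Polynomial.roots_multiset_prod_X_sub_C]
end

section
/- Let G^σ be an oriented k-regular graph on n vertices. Then E_S(G^σ) ≤ n√k, with equality if and only if S(G^σ)^T S(G^σ) = k I_n. -/
open Matrix

noncomputable def skewEnergy {V : Type*} [Fintype V] [DecidableEq V]
    (S : Matrix V V ℝ) : ℝ :=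
  ((cSpec S).map (fun z : ℂ => ‖z‖)).sum

open Polynomial in
lemma charpoly_diag_roots {n : Type*} [Fintype n] [DecidableEq n]
    (d : n → ℂ) : (Matrix.diagonal d).charpoly.roots = Finset.univ.val.map d := by
  have h : (Matrix.diagonal d).charpoly = ∏ i, (X - C (d i)) := by
    rw [Matrix.charpoly]
    have h2 : charmatrix (Matrix.diagonal d) = Matrix.diagonal (fun i => X - C (d i)) := by
      ext i j
      rcases eq_or_ne i j with rfl | hij
      · simp [charmatrix_apply_eq]
      · simp [charmatrix_apply_ne _ _ _ hij, Matrix.diagonal_apply_ne _ hij]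
    rw [h2, Matrix.det_diagonal]
  rw [h]
  have := Polynomial.roots_multiset_prod_X_sub_C (Finset.univ.val.map d)
  rw [← this, Multiset.map_map]
  rfl

open Polynomial in
lemma charpoly_conj_conj {n : Type*} [Fintype n] [DecidableEq n]
    (U A : Matrix n n ℂ) (h1 : U * star U = 1) :
    (U * A * star U).charpoly = A.charpoly := by
  unfold Matrix.charpoly
  have hmap : (U.map C) * ((star U).map C) = 1 := by
    rw [← Matrix.map_mul, h1, Matrix.map_one _ (map_zero C) (map_one C)]
  have key : charmatrix (U * A * star U)
      = U.map C * charmatrix A * (star U).map C := by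
    unfold charmatrix
    simp only [RingHom.mapMatrix_apply, Matrix.map_mul]
    rw [Matrix.mul_sub, Matrix.sub_mul]
    congr 1
    rw [show U.map (⇑C) * Matrix.scalar n X = Matrix.scalar n X * U.map (⇑C) from
      (Matrix.scalar_commute _ (fun r => Commute.all _ r) _).symm, mul_assoc, hmap, mul_one]
  rw [key, Matrix.det_mul, Matrix.det_mul, mul_comm, ← mul_assoc,
    mul_comm ((star U).map ⇑C).det (U.map ⇑C).det, ← Matrix.det_mul, hmap]
  simp

/-- For an oriented `k`-regular graph on `n` vertices, the skew energy is at most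
`n√k`, with equality if and only if `S(G^σ)ᵀ S(G^σ) = k Iₙ`. -/
theorem skewEnergy_le_of_regular
    {V : Type*} [Fintype V] [DecidableEq V]
    (G : SimpleGraph V) [DecidableRel G.Adj] (k : ℕ) (hreg : G.IsRegularOfDegree k)
    (S : Matrix V V ℝ) (hS : IsSkewAdj G S) :
    skewEnergy S ≤ (Fintype.card V : ℝ) * Real.sqrt k ∧
    (skewEnergy S = (Fintype.card V : ℝ) * Real.sqrt k ↔
      Sᵀ * S = (k : ℝ) • (1 : Matrix V V ℝ)) := by
  classical
  obtain ⟨hadj, hnadj, hskew⟩ := hS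
  set n : ℕ := Fintype.card V with hn
  set M : Matrix V V ℂ := S.map Complex.ofReal with hMdef
  have hSskew : ∀ i j, S j i = - S i j := by
    intro i j
    have := congrFun (congrFun hskew i) j
    simpa using this
  have hMH : Mᴴ = -M := by
    ext i j
    simp [hMdef, Matrix.conjTranspose_apply, Matrix.map_apply, hSskew i j, Complex.conj_ofReal]
  set H : Matrix V V ℂ := Complex.I • M with hHdef
  have hH : H.IsHermitian := by
    unfold Matrix.IsHermitian
    rw [hHdef, Matrix.conjTranspose_smul, hMH]
    simp [smul_smul]
  set U : Matrix V V ℂ := (hH.eigenvectorUnitary : Matrix V V ℂ) with hUdef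
  set μ : V → ℝ := hH.eigenvalues with hμdef
  set D : Matrix V V ℂ := Matrix.diagonal (RCLike.ofReal ∘ μ) with hDdef
  have hU1 : U * star U = 1 := Matrix.mem_unitaryGroup_iff.mp hH.eigenvectorUnitary.2
  have hU2 : star U * U = 1 := Matrix.mem_unitaryGroup_iff'.mp hH.eigenvectorUnitary.2
  have hspec : H = U * D * star U := hH.spectral_theorem
  -- M as conjugate of a diagonal matrix
  have hM' : M = U * Matrix.diagonal (fun i => -Complex.I * (μ i : ℂ)) * star U := by
    have h1 : M = (-Complex.I) • H := by
      rw [hHdef, smul_smul]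
      norm_num [Complex.I_mul_I]
    rw [h1, hspec, ← Matrix.smul_mul, ← Matrix.mul_smul, hDdef, ← Matrix.diagonal_smul]
    congr 2
  have hroots : cSpec S = Finset.univ.val.map (fun i => -Complex.I * (μ i : ℂ)) := by
    show (M.charpoly).roots = _
    rw [hM', charpoly_conj_conj _ _ hU1, charpoly_diag_roots]
  have henergy : skewEnergy S = ∑ i, |μ i| := by
    show ((cSpec S).map (fun z : ℂ => ‖z‖)).sum = _
    rw [hroots, Multiset.map_map]
    show ∑ i, ‖(-Complex.I * (μ i : ℂ))‖ = _
    refine Finset.sum_congr rfl fun i _ => ?_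
    simp [_root_.map_mul, Complex.norm_real]
  -- sum of squares of eigenvalues
  have hHH : H * H = U * Matrix.diagonal (fun i => ((μ i : ℂ))^2) * star U := by
    rw [hspec]
    have e1 : (U * D * star U) * (U * D * star U) = U * (D * D) * star U := by
      simp only [mul_assoc]
      rw [← mul_assoc (star U) U, hU2, one_mul]
    rw [e1, hDdef, Matrix.diagonal_mul_diagonal]
    congr 2
    ext i
    simp [sq]
  have hHM : H * H = -(M * M) := by
    rw [hHdef, Matrix.smul_mul, Matrix.mul_smul, smul_smul, Complex.I_mul_I, neg_one_smul]
  have hsumsq : ∑ i, (μ i)^2 = (n : ℝ) * k := by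
    have htr1 : (H * H).trace = ∑ i, ((μ i : ℂ))^2 := by
      rw [hHH, Matrix.trace_mul_cycle, hU2, one_mul, Matrix.trace_diagonal]
    have htr2 : (H * H).trace = ((∑ i, ∑ j, (S i j)^2 : ℝ) : ℂ) := by
      have h2 : (M * M).trace = ∑ i, ∑ j, (S i j : ℂ) * (S j i : ℂ) := by
        simp [Matrix.trace, Matrix.mul_apply, hMdef, Matrix.map_apply]
      rw [hHM, Matrix.trace_neg, h2, ← Finset.sum_neg_distrib]
      push_cast
      refine Finset.sum_congr rfl fun i _ => ?_
      rw [← Finset.sum_neg_distrib]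
      refine Finset.sum_congr rfl fun j _ => ?_
      rw [hSskew i j]
      push_cast
      ring
    have hreal : ∑ i, (μ i)^2 = ∑ i, ∑ j, (S i j)^2 := by
      have hceq := htr1.symm.trans htr2
      exact_mod_cast hceq
    have hrow : ∀ i, ∑ j, (S i j)^2 = (k : ℝ) := by
      intro i
      have hterm : ∀ j, (S i j)^2 = if G.Adj i j then (1:ℝ) else 0 := by
        intro j
        by_cases h : G.Adj i j
        · rcases hadj i j h with h' | h' <;> simp [h, h']
        · simp [h, hnadj i j h]
      rw [Finset.sum_congr rfl fun j _ => hterm j, Finset.sum_boole]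
      have hdeg := hreg i
      rw [SimpleGraph.degree, SimpleGraph.neighborFinset_eq_filter] at hdeg
      exact_mod_cast hdeg
    rw [hreal, Finset.sum_congr rfl fun i _ => hrow i, Finset.sum_const, Finset.card_univ,
      nsmul_eq_mul]
  have hk0 : (0:ℝ) ≤ (k:ℝ) := Nat.cast_nonneg k
  have hsqrt : Real.sqrt k * Real.sqrt k = (k:ℝ) := Real.mul_self_sqrt hk0
  have habs2 : ∑ i, |μ i|^2 = (n:ℝ) * k := by
    simp only [sq_abs]; exact hsumsq
  have hineq : ∑ i, |μ i| ≤ (n:ℝ) * Real.sqrt k := by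
    have h1 : (∑ i, |μ i|)^2 ≤ (n:ℝ) * ∑ i, |μ i|^2 := by
      have := sq_sum_le_card_mul_sum_sq (s := Finset.univ) (f := fun i => |μ i|)
      simpa [hn, Finset.card_univ] using this
    have h3 : (∑ i, |μ i|)^2 ≤ ((n:ℝ) * Real.sqrt k)^2 := by
      have : ((n:ℝ) * Real.sqrt k)^2 = (n:ℝ) * ((n:ℝ) * k) := by
        rw [mul_pow, sq, sq, hsqrt]; ring
      rw [this, ← habs2]
      exact h1.trans (by rw [habs2, ← habs2])
    have h4 := Real.sqrt_le_sqrt h3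
    rwa [Real.sqrt_sq (Finset.sum_nonneg fun i _ => abs_nonneg _),
      Real.sqrt_sq (by positivity)] at h4
  -- transfer between SᵀS = k•1 and H*H = k•1
  have hmapKS : (Sᵀ * S).map Complex.ofReal = H * H := by
    have e1 : Sᵀ * S = -(S * S) := by rw [hskew, neg_mul]
    have e2 : (-(S * S)).map Complex.ofReal = -(M * M) := by
      ext i j
      simp only [Matrix.map_apply, Matrix.neg_apply, Matrix.mul_apply, hMdef]
      push_cast
      ring
    rw [e1, e2, hHM]
  have hmapK1 : (((k:ℝ)) • (1 : Matrix V V ℝ)).map Complex.ofReal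
      = ((k:ℂ)) • (1 : Matrix V V ℂ) := by
    ext i j
    rcases eq_or_ne i j with rfl | hij
    · simp
    · simp [Matrix.one_apply_ne hij]
  have hiffKS : Sᵀ * S = (k:ℝ) • (1 : Matrix V V ℝ) ↔ H * H = (k:ℂ) • 1 := by
    constructor
    · intro h
      rw [← hmapKS, h, hmapK1]
    · intro h
      ext i j
      have := congrFun (congrFun (hmapKS.trans (h.trans hmapK1.symm)) i) j
      simp only [Matrix.map_apply] at this
      exact_mod_cast this
  refine ⟨by rw [henergy]; exact hineq, ?_, ?_⟩
  · intro heq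
    rw [henergy] at heq
    have hall : ∀ i, μ i ^ 2 = (k:ℝ) := by
      have hzero : ∑ i, (|μ i| - Real.sqrt k)^2 = 0 := by
        have e : ∀ i ∈ Finset.univ, (|μ i| - Real.sqrt k)^2
            = |μ i|^2 - 2*Real.sqrt k*|μ i| + Real.sqrt k*Real.sqrt k := fun i _ => by ring
        rw [Finset.sum_congr rfl e, Finset.sum_add_distrib, Finset.sum_sub_distrib,
          ← Finset.mul_sum, Finset.sum_const, Finset.card_univ, nsmul_eq_mul, habs2, heq, hsqrt]
        nlinarith [hsqrt]
      intro i
      have hz := (Finset.sum_eq_zero_iff_of_nonneg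
        (fun i _ => sq_nonneg (|μ i| - Real.sqrt k))).mp hzero i (Finset.mem_univ i)
      have habs : |μ i| = Real.sqrt k := by nlinarith [hz]
      rw [← sq_abs, habs, sq, hsqrt]
    rw [hiffKS]
    rw [hHH]
    have hdia : Matrix.diagonal (fun i => ((μ i:ℂ))^2) = (k:ℂ) • (1 : Matrix V V ℂ) := by
      ext i j
      rcases eq_or_ne i j with rfl | hij
      · simp only [Matrix.diagonal_apply_eq, Matrix.smul_apply, Matrix.one_apply_eq, smul_eq_mul,
          mul_one]
        exact_mod_cast congrArg (Complex.ofReal) (hall i)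
      · simp [Matrix.diagonal_apply_ne _ hij, Matrix.one_apply_ne hij]
    rw [hdia, Matrix.mul_smul, mul_one, Matrix.smul_mul, hU1]
  · intro hKS
    have hHK : H * H = (k:ℂ) • 1 := hiffKS.mp hKS
    have hdia : Matrix.diagonal (fun i => ((μ i:ℂ))^2) = (k:ℂ) • (1 : Matrix V V ℂ) := by
      have e := hHH.symm.trans hHK
      calc Matrix.diagonal (fun i => ((μ i:ℂ))^2)
          = (star U * U) * Matrix.diagonal (fun i => ((μ i:ℂ))^2) * (star U * U) := by
            rw [hU2, one_mul, mul_one]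
        _ = star U * (U * Matrix.diagonal (fun i => ((μ i:ℂ))^2) * star U) * U := by
            simp only [mul_assoc]
        _ = star U * ((k:ℂ) • 1) * U := by rw [e]
        _ = (k:ℂ) • (star U * U) := by
            rw [Matrix.mul_smul, mul_one, Matrix.smul_mul]
        _ = (k:ℂ) • 1 := by rw [hU2]
    have hall : ∀ i, |μ i| = Real.sqrt k := by
      intro i
      have hd := congrFun (congrFun hdia i) i
      simp only [Matrix.diagonal_apply_eq, Matrix.smul_apply, Matrix.one_apply_eq, smul_eq_mul,
        mul_one] at hd
      have hr : μ i ^ 2 = (k:ℝ) := by exact_mod_cast hd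
      rw [← hr, Real.sqrt_sq_eq_abs]
    rw [henergy, Finset.sum_congr rfl fun i _ => hall i, Finset.sum_const, Finset.card_univ,
      nsmul_eq_mul]
end

section
/- Let A be an m×m real skew-symmetric matrix with A^T A = ℓ I_m which in some basis has block form [[0,B],[−B^T,0]], let C be an n×n real skew-symmetric matrix with C^T C = k I_n, and set I' = diag(I_{m_1}, −I_{m_2}) compatible with the block structure. Then S = I' ⊗ C + A ⊗ I_n satisfies S^T S = (ℓ + k) I_{mn}. -/
open Matrix Kronecker

/-- If `A = [[0,B],[-Bᵀ,0]]` is skew-symmetric with `Aᵀ A = ℓ I`, `C` is skew-symmetric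
with `Cᵀ C = k I`, and `I' = diag(I, -I)`, then `S = I' ⊗ C + A ⊗ I` satisfies
`Sᵀ S = (ℓ + k) I`. -/
theorem kronecker_max_energy_matrix
    (m₁ m₂ n : ℕ) (ℓ k : ℝ)
    (B : Matrix (Fin m₁) (Fin m₂) ℝ)
    (hA : (Matrix.fromBlocks 0 B (-Bᵀ) 0 :
        Matrix (Fin m₁ ⊕ Fin m₂) (Fin m₁ ⊕ Fin m₂) ℝ)ᵀ *
      Matrix.fromBlocks 0 B (-Bᵀ) 0 = ℓ • 1)
    (C : Matrix (Fin n) (Fin n) ℝ) (hCskew : Cᵀ = -C)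
    (hC : Cᵀ * C = k • 1) :
    let A : Matrix (Fin m₁ ⊕ Fin m₂) (Fin m₁ ⊕ Fin m₂) ℝ :=
      Matrix.fromBlocks 0 B (-Bᵀ) 0
    let I' : Matrix (Fin m₁ ⊕ Fin m₂) (Fin m₁ ⊕ Fin m₂) ℝ :=
      Matrix.fromBlocks 1 0 0 (-1)
    let S := I' ⊗ₖ C + A ⊗ₖ (1 : Matrix (Fin n) (Fin n) ℝ)
    Sᵀ * S = (ℓ + k) • 1 := by
  intro A I' S
  have hI't : I'ᵀ = I' := by
    simp [I', Matrix.fromBlocks_transpose]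
  have hI'2 : I' * I' = 1 := by
    simp [I', Matrix.fromBlocks_multiply, Matrix.fromBlocks_one]
  have hAt : Aᵀ * I' = I' * A := by
    simp [A, I', Matrix.fromBlocks_transpose, Matrix.fromBlocks_multiply]
  have hS : Sᵀ * S = (I'ᵀ * I') ⊗ₖ (Cᵀ * C) + (I'ᵀ * A) ⊗ₖ (Cᵀ * 1)
      + ((Aᵀ * I') ⊗ₖ ((1:Matrix (Fin n) (Fin n) ℝ)ᵀ * C)
      + (Aᵀ * A) ⊗ₖ ((1:Matrix (Fin n) (Fin n) ℝ)ᵀ * 1)) := by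
    simp only [S, Matrix.transpose_add, Matrix.kroneckerMap_transpose,
      Matrix.add_mul, Matrix.mul_add, Matrix.mul_kronecker_mul]
    abel
  rw [hS, hI't, hI'2, hC, hAt, hA, hCskew]
  have hneg : (I' * A) ⊗ₖ (-C) = -((I' * A) ⊗ₖ C) := by
    rw [← neg_one_smul ℝ C, Matrix.kronecker_smul, neg_one_smul]
  simp only [Matrix.mul_one, Matrix.transpose_one, Matrix.one_mul, hneg, Matrix.kronecker_smul,
    Matrix.smul_kronecker, Matrix.one_kronecker_one]
  rw [add_smul]
  abel
end

section
/- There exists, for every r ≥ 1, a 4r-regular graph on 2^{3r} vertices admitting an orientation with maximum skew energy 2^{3r}·√(4r); namely the iterated Cartesian product G_r = K_{4,4} □ G_{r−1} with G_1 = K_{4,4}, given that K_{4,4} has an orientation τ with S(K_{4,4}^τ)^T S(K_{4,4}^τ) = 4 I_8. -/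
open Matrix

open Polynomial

lemma myEvalCharpoly {n : Type*} [Fintype n] [DecidableEq n] (M : Matrix n n ℂ) (t : ℂ) :
    M.charpoly.eval t = (t • (1 : Matrix n n ℂ) - M).det := by
  rw [Matrix.charpoly, _root_.eval_det, Matrix.matPolyEquiv_charmatrix]
  rw [Polynomial.eval_sub, Polynomial.eval_X, Polynomial.eval_C]
  congr 1
  ext i j
  simp [Matrix.scalar, Matrix.smul_eq_diagonal_mul, Matrix.one_apply, Matrix.diagonal_apply]

lemma rootSq {n : Type*} [Fintype n] [DecidableEq n] (M : Matrix n n ℂ) (d : ℂ)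
    (hM : M * M = -(d • 1)) {t : ℂ} (ht : M.charpoly.IsRoot t) : t ^ 2 = -d := by
  rcases isEmpty_or_nonempty n with hn | hn
  · have h1 : M.charpoly.eval t = 1 := by rw [myEvalCharpoly, Matrix.det_isEmpty]
    rw [Polynomial.IsRoot] at ht
    rw [ht] at h1; simp at h1
  · have hdet : (t • (1 : Matrix n n ℂ) - M).det = 0 := by rw [← myEvalCharpoly]; exact ht
    have key : (t • (1 : Matrix n n ℂ) - M) * (t • (1 : Matrix n n ℂ) + M)
        = (t ^ 2 + d) • 1 := by
      rw [sub_mul, mul_add, mul_add, smul_mul_assoc, smul_mul_assoc, one_mul,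
        mul_smul_comm, mul_one, hM, smul_smul, ← sq, one_mul, add_smul]
      abel
    have h0 : ((t ^ 2 + d) • (1 : Matrix n n ℂ)).det = 0 := by
      rw [← key, Matrix.det_mul, hdet, zero_mul]
    rw [Matrix.det_smul, Matrix.det_one, mul_one, pow_eq_zero_iff Fintype.card_ne_zero] at h0
    linear_combination h0

lemma energyEq {n : Type*} [Fintype n] [DecidableEq n] (S : Matrix n n ℝ) (d : ℝ) (hd : 0 ≤ d)
    (hskew : Sᵀ = -S) (h : Sᵀ * S = d • 1) :
    skewEnergy S = (Fintype.card n : ℝ) * Real.sqrt d := by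
  set M := S.map (Complex.ofReal) with hMdef
  have hSS : S * S = -(d • 1) := by
    have : (-S) * S = d • 1 := by rw [← hskew]; exact h
    rw [neg_mul] at this
    rw [← neg_neg (S * S), this]
  have hM : M * M = -((d : ℂ) • 1) := by
    have h1 : (S * S).map (Complex.ofRealHom : ℝ →+* ℂ) = M * M := Matrix.map_mul
    have h2 : ((-(d • 1) : Matrix n n ℝ)).map (Complex.ofRealHom : ℝ →+* ℂ)
        = -((d : ℂ) • 1) := by
      ext i j
      by_cases hij : i = j <;>
        simp [Matrix.map_apply, Matrix.one_apply, Matrix.smul_apply, hij]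
    rw [← h1, ← h2, hSS]
  have hroots : ∀ t ∈ M.charpoly.roots, ‖t‖ = Real.sqrt d := by
    intro t ht
    have h2 : t ^ 2 = -(d : ℂ) := rootSq M _ hM (Polynomial.isRoot_of_mem_roots ht)
    have habs : ‖t‖ ^ 2 = d := by
      have := congrArg (fun z : ℂ => ‖z‖) h2
      rwa [norm_pow, norm_neg, Complex.norm_real, Real.norm_eq_abs, abs_of_nonneg hd] at this
    rw [← habs, Real.sqrt_sq (norm_nonneg t)]
  have hcard : M.charpoly.roots.card = Fintype.card n := by
    rcases isEmpty_or_nonempty n with hn | hn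
    · simp [Matrix.charpoly, Matrix.det_isEmpty]
    · rw [← Matrix.charpoly_natDegree_eq_dim M]
      exact (Polynomial.splits_iff_card_roots.mp (IsAlgClosed.splits _))
  have hrep : M.charpoly.roots.map (fun z : ℂ => ‖z‖)
      = Multiset.replicate (Fintype.card n) (Real.sqrt d) := by
    apply Multiset.eq_replicate.mpr
    constructor
    · rw [Multiset.card_map, hcard]
    · intro b hb
      rcases Multiset.mem_map.mp hb with ⟨t, ht, rfl⟩
      exact hroots t ht
  rw [skewEnergy, cSpec, ← hMdef, hrep, Multiset.sum_replicate, nsmul_eq_mul]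

lemma regularOfSkew {V : Type*} [Fintype V] [DecidableEq V] (G : SimpleGraph V)
    [DecidableRel G.Adj] (S : Matrix V V ℝ) (d : ℕ)
    (h1 : IsSkewAdj G S) (h2 : Sᵀ * S = (d : ℝ) • 1) : G.IsRegularOfDegree d := by
  intro v
  have hvv := congrFun (congrFun h2 v) v
  rw [Matrix.mul_apply] at hvv
  have key : (∑ j, Sᵀ v j * S j v) = ((G.degree v : ℝ)) := by
    rw [SimpleGraph.degree, Finset.card_eq_sum_ones, Nat.cast_sum, Nat.cast_one]
    rw [← Finset.sum_subset (Finset.subset_univ (G.neighborFinset v))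
      (fun j _ hj => ?_)]
    · apply Finset.sum_congr rfl
      intro j hj
      rw [SimpleGraph.mem_neighborFinset] at hj
      have hadj : G.Adj j v := hj.symm
      rcases h1.1 j v hadj with hh | hh <;>
        simp [Matrix.transpose_apply, hh]
    · rw [SimpleGraph.mem_neighborFinset] at hj
      have : S j v = 0 := h1.2.1 j v (fun hc => hj hc.symm)
      simp [Matrix.transpose_apply, this]
  rw [key] at hvv
  have : ((d : ℝ) • (1 : Matrix V V ℝ)) v v = (d : ℝ) := by
    simp [Matrix.smul_apply, Matrix.one_apply]
  rw [this] at hvv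
  exact_mod_cast hvv

lemma transportSkew {α β : Type*} [Fintype α] [DecidableEq α] [Fintype β] [DecidableEq β]
    (e : α ≃ β) (G : SimpleGraph α) (S : Matrix α α ℝ) (d : ℝ)
    (h1 : IsSkewAdj G S) (h2 : Sᵀ * S = d • 1) :
    ∃ (G' : SimpleGraph β) (_ : DecidableRel G'.Adj) (S' : Matrix β β ℝ),
      IsSkewAdj G' S' ∧ S'ᵀ * S' = d • 1 := by
  classical
  refine ⟨⟨fun i j => G.Adj (e.symm i) (e.symm j), ⟨fun i j h => h.symm⟩, ⟨fun i h => G.irrefl h⟩⟩,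
    Classical.decRel _, S.submatrix e.symm e.symm, ⟨?_, ?_, ?_⟩, ?_⟩
  · intro i j h; exact h1.1 _ _ h
  · intro i j h; exact h1.2.1 _ _ h
  · ext i j
    have := congrFun (congrFun h1.2.2 (e.symm i)) (e.symm j)
    simpa [Matrix.transpose_apply, Matrix.submatrix_apply] using this
  · rw [Matrix.transpose_submatrix, Matrix.submatrix_mul_equiv, h2]
    ext i j
    by_cases hij : i = j <;>
      simp [Matrix.submatrix_apply, Matrix.smul_apply, Matrix.one_apply, hij]

open Kronecker in
lemma stepLemma {β : Type*} [Fintype β] [DecidableEq β]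
    (SK : Matrix (Fin 4 ⊕ Fin 4) (Fin 4 ⊕ Fin 4) ℝ)
    (hSK : IsSkewAdj (completeBipartiteGraph (Fin 4) (Fin 4)) SK)
    (hSK2 : SKᵀ * SK = (4 : ℝ) • 1)
    (G : SimpleGraph β) (S : Matrix β β ℝ) (k : ℝ)
    (hS : IsSkewAdj G S) (hS2 : Sᵀ * S = k • 1) :
    ∃ S' : Matrix ((Fin 4 ⊕ Fin 4) × β) ((Fin 4 ⊕ Fin 4) × β) ℝ,
      IsSkewAdj ((completeBipartiteGraph (Fin 4) (Fin 4)).boxProd G) S' ∧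
      S'ᵀ * S' = (4 + k) • 1 := by
  classical
  set ε : Fin 4 ⊕ Fin 4 → ℝ := Sum.elim (fun _ => (1 : ℝ)) (fun _ => -1) with hε
  set E : Matrix (Fin 4 ⊕ Fin 4) (Fin 4 ⊕ Fin 4) ℝ := Matrix.diagonal ε with hE
  set S' : Matrix ((Fin 4 ⊕ Fin 4) × β) ((Fin 4 ⊕ Fin 4) × β) ℝ :=
    SK ⊗ₖ (1 : Matrix β β ℝ) + E ⊗ₖ S with hS'
  have hKdiag : ∀ a, SK a a = 0 := fun a =>
    hSK.2.1 a a (by cases a <;> simp)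
  have hcomm : SK * E + E * SK = 0 := by
    ext a b
    simp only [Matrix.add_apply, Matrix.mul_diagonal, Matrix.diagonal_mul, Matrix.zero_apply, hE]
    rcases a with a | a <;> rcases b with b | b
    · have : SK (Sum.inl a) (Sum.inl b) = 0 := hSK.2.1 _ _ (by simp)
      simp [this]
    · simp [hε]
    · simp [hε]
    · have : SK (Sum.inr a) (Sum.inr b) = 0 := hSK.2.1 _ _ (by simp)
      simp [this]
  have hEE : E * E = 1 := by
    rw [hE, Matrix.diagonal_mul_diagonal]
    ext a b
    rcases eq_or_ne a b with rfl | hab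
    · rcases a with a | a <;> simp [hε]
    · simp [Matrix.diagonal_apply_ne _ hab, Matrix.one_apply_ne hab]
  have hskew' : S'ᵀ = -S' := by
    rw [hS', Matrix.transpose_add, ← Matrix.kroneckerMap_transpose,
      ← Matrix.kroneckerMap_transpose, Matrix.transpose_one, hSK.2.2, hS.2.2,
      Matrix.diagonal_transpose]
    rw [neg_add]
    congr 1
    · ext ⟨a, b⟩ ⟨a', b'⟩; simp [Matrix.kroneckerMap_apply]
    · ext ⟨a, b⟩ ⟨a', b'⟩; simp [Matrix.kroneckerMap_apply, hE]
  refine ⟨S', ⟨?_, ?_, hskew'⟩, ?_⟩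
  · rintro ⟨a, b⟩ ⟨a', b'⟩ hadj
    rw [SimpleGraph.boxProd_adj] at hadj
    rcases hadj with ⟨h1, h2⟩ | ⟨h1, h2⟩
    · have hne : a ≠ a' := h1.ne
      have hb : b = b' := h2
      subst hb
      have := hSK.1 a a' h1
      rcases this with hh | hh <;>
        simp [hS', Matrix.kroneckerMap_apply, Matrix.one_apply, h2, hE,
          Matrix.diagonal_apply_ne _ hne, hh, Matrix.one_apply_eq]
    · have hbne : b ≠ b' := h1.ne
      subst h2
      have := hS.1 b b' h1
      have hεa : ε a = 1 ∨ ε a = -1 := by rcases a with a | a <;> simp [hε]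
      rcases this with hh | hh <;> rcases hεa with he | he <;>
        simp [hS', Matrix.kroneckerMap_apply, Matrix.one_apply, hbne, hE,
          Matrix.diagonal_apply_eq, hh, he, hKdiag]
  · rintro ⟨a, b⟩ ⟨a', b'⟩ hadj
    rw [SimpleGraph.boxProd_adj] at hadj
    push_neg at hadj
    obtain ⟨hc1, hc2⟩ := hadj
    by_cases hbb : b = b'
    · subst hbb
      have hKa : SK a a' = 0 := by
        by_cases haa : a = a'
        · subst haa; exact hKdiag a
        · exact hSK.2.1 a a' (fun hc => (hc1 hc) rfl)
      by_cases haa : a = a'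
      · subst haa
        have : S b b = 0 := hS.2.1 b b (G.irrefl)
        simp [hS', Matrix.kroneckerMap_apply, hKa, hE, this]
      · simp [hS', Matrix.kroneckerMap_apply, hKa, hE, Matrix.diagonal_apply_ne _ haa]
    · by_cases haa : a = a'
      · subst haa
        have : S b b' = 0 := hS.2.1 b b' (fun hc => (hc2 hc) rfl)
        simp [hS', Matrix.kroneckerMap_apply, Matrix.one_apply, hbb, this]
      · simp [hS', Matrix.kroneckerMap_apply, Matrix.one_apply, hbb, hE,
          Matrix.diagonal_apply_ne _ haa]
  · have hSK2' : (-SK) * SK = (4 : ℝ) • (1 : Matrix (Fin 4 ⊕ Fin 4) (Fin 4 ⊕ Fin 4) ℝ) := by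
      rw [← hSK.2.2]; exact hSK2
    have hS2' : (-S) * S = k • (1 : Matrix β β ℝ) := by
      rw [← hS.2.2]; exact hS2
    have hT : S'ᵀ = ((-SK) ⊗ₖ (1 : Matrix β β ℝ)) + (E ⊗ₖ (-S)) := by
      rw [hskew', hS']
      ext x y
      simp [Matrix.kroneckerMap_apply]
      ring
    have e1 : ((-SK) ⊗ₖ (1 : Matrix β β ℝ)) * (SK ⊗ₖ (1 : Matrix β β ℝ))
        = (4 : ℝ) • (1 : Matrix ((Fin 4 ⊕ Fin 4) × β) ((Fin 4 ⊕ Fin 4) × β) ℝ) := by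
      rw [← Matrix.mul_kronecker_mul, hSK2', one_mul, Matrix.smul_kronecker,
        Matrix.one_kronecker_one]
    have e2 : ((-SK) ⊗ₖ (1 : Matrix β β ℝ)) * (E ⊗ₖ S) = (-(SK * E)) ⊗ₖ S := by
      rw [← Matrix.mul_kronecker_mul, one_mul, neg_mul]
    have e3 : (E ⊗ₖ (-S)) * (SK ⊗ₖ (1 : Matrix β β ℝ)) = (E * SK) ⊗ₖ (-S) := by
      rw [← Matrix.mul_kronecker_mul, mul_one]
    have e4 : (E ⊗ₖ (-S)) * (E ⊗ₖ S)
        = k • (1 : Matrix ((Fin 4 ⊕ Fin 4) × β) ((Fin 4 ⊕ Fin 4) × β) ℝ) := by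
      rw [← Matrix.mul_kronecker_mul, hEE, hS2', Matrix.kronecker_smul,
        Matrix.one_kronecker_one]
    have ecross : (-(SK * E)) ⊗ₖ S + (E * SK) ⊗ₖ (-S) = 0 := by
      have hx : (-(SK * E)) ⊗ₖ S + (E * SK) ⊗ₖ (-S) = (-(SK * E + E * SK)) ⊗ₖ S := by
        rw [neg_add, Matrix.add_kronecker]
        congr 1
        ext x y
        simp [Matrix.kroneckerMap_apply]
      rw [hx, hcomm, neg_zero, Matrix.zero_kronecker]
    rw [hT]
    conv_lhs => rw [hS']
    rw [add_mul, mul_add, mul_add, e1, e2, e3, e4]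
    have hre : (4 : ℝ) • (1 : Matrix ((Fin 4 ⊕ Fin 4) × β) ((Fin 4 ⊕ Fin 4) × β) ℝ)
        + (-(SK * E)) ⊗ₖ S + ((E * SK) ⊗ₖ (-S) + k • 1)
        = (4 : ℝ) • 1 + k • 1 + ((-(SK * E)) ⊗ₖ S + (E * SK) ⊗ₖ (-S)) := by abel
    rw [hre, ecross, add_zero, ← add_smul]

lemma buildData (SK : Matrix (Fin 4 ⊕ Fin 4) (Fin 4 ⊕ Fin 4) ℝ)
    (hSK : IsSkewAdj (completeBipartiteGraph (Fin 4) (Fin 4)) SK)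
    (hSK2 : SKᵀ * SK = (4 : ℝ) • 1) :
    ∀ r : ℕ, 1 ≤ r → ∃ (G : SimpleGraph (Fin (2 ^ (3 * r)))) (_ : DecidableRel G.Adj)
      (S : Matrix (Fin (2 ^ (3 * r))) (Fin (2 ^ (3 * r))) ℝ),
      IsSkewAdj G S ∧ Sᵀ * S = ((4 * r : ℕ) : ℝ) • 1 := by
  intro r hr
  induction r, hr using Nat.le_induction with
  | base =>
      have e : (Fin 4 ⊕ Fin 4) ≃ Fin (2 ^ (3 * 1)) := Fintype.equivFinOfCardEq (by simp)
      obtain ⟨G', i', S', h1, h2⟩ := transportSkew e _ SK ((4 : ℝ)) hSK hSK2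
      refine ⟨G', i', S', h1, ?_⟩
      rw [h2]
      norm_num
  | succ r hr ih =>
      obtain ⟨G, inst, S, h1, h2⟩ := ih
      obtain ⟨S', hs1, hs2⟩ := stepLemma SK hSK hSK2 _ S _ h1 h2
      have e : ((Fin 4 ⊕ Fin 4) × Fin (2 ^ (3 * r))) ≃ Fin (2 ^ (3 * (r + 1))) :=
        Fintype.equivFinOfCardEq (by
          simp [Fintype.card_prod, Fintype.card_sum]
          ring)
      obtain ⟨G', i', S'', t1, t2⟩ := transportSkew e _ S' _ hs1 hs2
      refine ⟨G', i', S'', t1, ?_⟩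
      rw [t2]
      congr 1
      push_cast
      ring


/-- For every `r ≥ 1` there is a `4r`-regular graph on `2^(3r)` vertices admitting an
orientation with maximum skew energy `2^(3r) · √(4r)` (equivalently, whose
skew-adjacency matrix `S` satisfies `Sᵀ S = 4r · I`). -/
theorem exists_max_energy_4r_regular
    (hK44 : ∃ SK : Matrix (Fin 4 ⊕ Fin 4) (Fin 4 ⊕ Fin 4) ℝ,
      IsSkewAdj (completeBipartiteGraph (Fin 4) (Fin 4)) SK ∧
      SKᵀ * SK = (4 : ℝ) • 1) :
    ∀ r : ℕ, 1 ≤ r →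
      ∃ (G : SimpleGraph (Fin (2 ^ (3 * r)))) (_ : DecidableRel G.Adj)
        (S : Matrix (Fin (2 ^ (3 * r))) (Fin (2 ^ (3 * r))) ℝ),
        G.IsRegularOfDegree (4 * r) ∧ IsSkewAdj G S ∧
        Sᵀ * S = ((4 * r : ℕ) : ℝ) • 1 ∧
        skewEnergy S = (2 ^ (3 * r) : ℝ) * Real.sqrt ((4 * r : ℕ) : ℝ) := by
  obtain ⟨SK, hSK, hSK2⟩ := hK44
  intro r hr
  obtain ⟨G, inst, S, h1, h2⟩ := buildData SK hSK hSK2 r hr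
  refine ⟨G, inst, S, regularOfSkew G S (4 * r) h1 h2, h1, h2, ?_⟩
  have := energyEq S ((4 * r : ℕ) : ℝ) (by positivity) h1.2.2 h2
  rw [this, Fintype.card_fin]
  push_cast
  ring
end
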